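/- arXiv:0711.2844 — 2 statements merged into one kernel-verified Lean document; each statement's English description precedes it below -/
import Mathlib

section
/- Let G be a connected claw-free graph with maximum degree Δ(G) = 3 that contains no A_i for any i of the form i = 3j+1 (j a positive integer). If G has a vertex of degree 1, then G has a dynamic 3-coloring. -/
open SimpleGraph

/-- A dynamic `k`-coloring of `G`: a proper vertex coloring such that every vertex
with at least two neighbors sees at least two distinct colors among its neighbors. -/
def IsDynamicColoring {V : Type*} (G : SimpleGraph V) (k : ℕ) (c : V → Fin k) : Prop :=
  (∀ ⦃u v : V⦄, G.Adj u v → c u ≠ c v) ∧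
  ∀ v : V, 2 ≤ (G.neighborSet v).ncard →
    ∃ u w : V, G.Adj v u ∧ G.Adj v w ∧ c u ≠ c w

/-- The dynamic chromatic number: the least `k` admitting a dynamic `k`-coloring. -/
noncomputable def dynamicChromaticNumber {V : Type*} (G : SimpleGraph V) : ℕ :=
  sInf {k : ℕ | ∃ c : V → Fin k, IsDynamicColoring G k c}

/-- `G` is claw-free: no induced subgraph isomorphic to `K_{1,3}`. -/
def ClawFree {V : Type*} (G : SimpleGraph V) : Prop :=
  ¬ ∃ v a b c : V, a ≠ b ∧ a ≠ c ∧ b ≠ c ∧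
    G.Adj v a ∧ G.Adj v b ∧ G.Adj v c ∧ ¬ G.Adj a b ∧ ¬ G.Adj a c ∧ ¬ G.Adj b c

/-- `G` contains an `A_i`: a path on `i` vertices whose `i - 2` internal vertices have
degree 2 in `G` and whose two end-vertices have degree 3 in `G`. -/
def HasAPath {V : Type*} (G : SimpleGraph V) (i : ℕ) : Prop :=
  ∃ v : ℕ → V,
    (∀ a b : ℕ, a < i → b < i → v a = v b → a = b) ∧
    (∀ a : ℕ, a + 1 < i → G.Adj (v a) (v (a + 1))) ∧
    (∀ a : ℕ, 0 < a → a + 1 < i → (G.neighborSet (v a)).ncard = 2) ∧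
    (G.neighborSet (v 0)).ncard = 3 ∧
    (G.neighborSet (v (i - 1))).ncard = 3

namespace DynAux

set_option linter.unusedSectionVars false

variable {V : Type*} [Fintype V] (G : SimpleGraph V)

/-- degree as ncard of neighbor set -/
noncomputable def d (v : V) : ℕ := (G.neighborSet v).ncard

lemma two_of {S : Set V} (h : S.ncard = 2) {a b c : V} (ha : a ∈ S) (hb : b ∈ S)
    (hab : a ≠ b) (hc : c ∈ S) : c = a ∨ c = b := by
  by_contra hno
  push_neg at hno
  have hsub : ({a, b, c} : Set V) ⊆ S := by
    intro x hx
    rcases hx with rfl | rfl | rfl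
    · exact ha
    · exact hb
    · exact hc
  have h3 : ({a, b, c} : Set V).ncard = 3 := by
    rw [Set.ncard_insert_of_notMem (by
        simp only [Set.mem_insert_iff, Set.mem_singleton_iff]
        push_neg
        exact ⟨hab, fun h => hno.1 h.symm⟩) (Set.toFinite _),
      Set.ncard_insert_of_notMem (by
        simp only [Set.mem_singleton_iff]
        exact fun h => hno.2 h.symm) (Set.toFinite _), Set.ncard_singleton]
  have := Set.ncard_le_ncard hsub (Set.toFinite _)
  omega

lemma three_of {S : Set V} (h : S.ncard = 3) {a b : V} (ha : a ∈ S) (hb : b ∈ S)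
    (hab : a ≠ b) : ∃ c ∈ S, c ≠ a ∧ c ≠ b := by
  by_contra hno
  push_neg at hno
  have hsub : S ⊆ {a, b} := by
    intro c hc
    rcases eq_or_ne c a with rfl | hca
    · exact Set.mem_insert _ _
    · exact (hno c hc hca) ▸ Set.mem_insert_of_mem _ rfl
  have := Set.ncard_le_ncard hsub (Set.toFinite _)
  rw [Set.ncard_pair hab] at this
  omega

/-- a set closed under adjacency contains everything reachable from it -/
lemma closed_reach {T : Set V} (hT : ∀ x ∈ T, ∀ y, G.Adj x y → y ∈ T)
    {v w : V} (hv : v ∈ T) (h : G.Reachable v w) : w ∈ T := by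
  obtain ⟨p⟩ := h
  induction p with
  | nil => exact hv
  | cons h p ih => exact ih (hT _ hv _ h)

/-- a set of vertices of degree ≤ 2 closed under adjacency is impossible -/
lemma closed_contra (hconn : G.Connected) (hmax' : ∃ v : V, d G v = 3)
    {T : Set V} (hT : ∀ x ∈ T, ∀ y, G.Adj x y → y ∈ T)
    (hdeg : ∀ x ∈ T, d G x ≠ 3) (hne : T.Nonempty) : False := by
  obtain ⟨w, hw⟩ := hmax'
  obtain ⟨v, hv⟩ := hne
  exact hdeg w (closed_reach G hT hv (hconn.preconnected v w)) hw

open Classical in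
/-- the other neighbor of a degree-2 vertex -/
noncomputable def oth (v p : V) : V :=
  if h : ∃ w, G.Adj v w ∧ w ≠ p then h.choose else v

lemma nbr_two {v p : V} (h2 : d G v = 2) (hp : G.Adj v p) :
    G.Adj v (oth G v p) ∧ oth G v p ≠ p ∧
      ∀ w, G.Adj v w → w = p ∨ w = oth G v p := by
  have hex : ∃ w, G.Adj v w ∧ w ≠ p := by
    obtain ⟨x, y, hxy, hset⟩ := Set.ncard_eq_two.mp h2
    have hpm : p ∈ ({x, y} : Set V) := hset ▸ hp
    rcases hpm with rfl | rfl
    · exact ⟨y, by rw [← SimpleGraph.mem_neighborSet, hset]; simp, fun h => hxy h.symm⟩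
    · exact ⟨x, by rw [← SimpleGraph.mem_neighborSet, hset]; simp, hxy⟩
  have hspec := hex.choose_spec
  have hoth : oth G v p = hex.choose := by
    rw [oth]
    exact dif_pos hex
  rw [hoth]
  refine ⟨hspec.1, hspec.2, fun w hw => ?_⟩
  exact two_of h2 hp hspec.1 (fun h => hspec.2 h.symm) hw

lemma nbr_one {v p : V} (h1 : d G v = 1) (hp : G.Adj v p) :
    ∀ w, G.Adj v w → w = p := by
  obtain ⟨x, hset⟩ := Set.ncard_eq_one.mp h1
  intro w hw
  have h1 : w ∈ ({x} : Set V) := hset ▸ hw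
  have h2 : p ∈ ({x} : Set V) := hset ▸ hp
  simp only [Set.mem_singleton_iff] at h1 h2
  rw [h1, h2]

lemma d_pos {v p : V} (hp : G.Adj v p) : 0 < d G v :=
  Set.ncard_pos (Set.toFinite _) |>.mpr ⟨p, hp⟩


open Classical in
/-- one step of the deterministic walk -/
noncomputable def stepP : V × V → V × V :=
  fun q => (q.2, if d G q.2 = 2 then oth G q.2 q.1 else q.2)

/-- the deterministic walk starting at s, first step x;
`gseq s x k` is the k-th vertex (gseq 0 = s, gseq 1 = x). -/
noncomputable def gseq (s x : V) : ℕ → V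
  | 0 => s
  | (n+1) => ((stepP G)^[n] (s, x)).2

@[simp] lemma gseq_zero (s x : V) : gseq G s x 0 = s := rfl

@[simp] lemma gseq_one (s x : V) : gseq G s x 1 = x := rfl

lemma stepP_iter_fst (s x : V) (n : ℕ) :
    ((stepP G)^[n] (s, x)).1 = gseq G s x n := by
  induction n with
  | zero => rfl
  | succ n ih =>
    rw [Function.iterate_succ_apply']
    rfl

lemma gseq_two (s x : V) (n : ℕ) :
    gseq G s x (n+2) = if d G (gseq G s x (n+1)) = 2 then
      oth G (gseq G s x (n+1)) (gseq G s x n) else gseq G s x (n+1) := by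
  show ((stepP G)^[n+1] (s,x)).2 = _
  rw [Function.iterate_succ_apply']
  have h1 : ((stepP G)^[n] (s,x)).2 = gseq G s x (n+1) := rfl
  simp only [stepP, h1, stepP_iter_fst]

section Walk

variable {s x : V} (hadj : G.Adj s x)

include hadj

/-- adjacency along the walk while interior vertices have degree two -/
lemma walk_adj {m : ℕ} (hm : ∀ j, 1 ≤ j → j ≤ m → d G (gseq G s x j) = 2) :
    ∀ k ≤ m, G.Adj (gseq G s x k) (gseq G s x (k+1)) := by
  intro k hk
  induction k with
  | zero => exact hadj
  | succ k ih =>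
    have h2 : d G (gseq G s x (k+1)) = 2 := hm (k+1) (by omega) hk
    have hprev : G.Adj (gseq G s x (k+1)) (gseq G s x k) := (ih (by omega)).symm
    have := (nbr_two G h2 hprev).1
    rw [gseq_two, if_pos h2]
    exact this

lemma walk_nb {m : ℕ} (hm : ∀ j, 1 ≤ j → j ≤ m → d G (gseq G s x j) = 2) :
    ∀ k, k + 1 ≤ m → gseq G s x (k+2) ≠ gseq G s x k := by
  intro k hk
  have h2 : d G (gseq G s x (k+1)) = 2 := hm (k+1) (by omega) hk
  have hprev : G.Adj (gseq G s x (k+1)) (gseq G s x k) :=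
    (walk_adj G hadj hm k (by omega)).symm
  rw [gseq_two, if_pos h2]
  exact (nbr_two G h2 hprev).2.1

lemma walk_nbrchar {m : ℕ} (hm : ∀ j, 1 ≤ j → j ≤ m → d G (gseq G s x j) = 2) :
    ∀ j, 1 ≤ j → j ≤ m → ∀ w, G.Adj (gseq G s x j) w →
      w = gseq G s x (j-1) ∨ w = gseq G s x (j+1) := by
  intro j hj1 hjm w hw
  obtain ⟨j', rfl⟩ : ∃ j', j = j' + 1 := ⟨j - 1, by omega⟩
  have h2 : d G (gseq G s x (j'+1)) = 2 := hm _ hj1 hjm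
  have hprev : G.Adj (gseq G s x (j'+1)) (gseq G s x j') :=
    (walk_adj G hadj hm j' (by omega)).symm
  have hchar := (nbr_two G h2 hprev).2.2 w hw
  have hoth : gseq G s x (j'+2) = oth G (gseq G s x (j'+1)) (gseq G s x j') := by
    rw [gseq_two, if_pos h2]
  rcases hchar with h | h
  · left; simpa using h
  · right; rw [hoth]; exact h

/-- the master no-repetition lemma: the walk is injective while interior,
except possibly returning to its start (when the start has degree ≠ 2) -/
lemma walk_master (hconn : G.Connected) (hmax' : ∃ v : V, d G v = 3)
    {m : ℕ} (hm : ∀ j, 1 ≤ j → j ≤ m → d G (gseq G s x j) = 2) :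
    ∀ j i, i < j → j ≤ m + 1 → gseq G s x i = gseq G s x j →
      i = 0 ∧ j = m + 1 ∧ d G s ≠ 2 := by
  intro j
  induction j using Nat.strong_induction_on with
  | _ j IH =>
  intro i hij hjm heq
  have noRep : ∀ j' < j, ∀ i' < j', gseq G s x i' ≠ gseq G s x j' := by
    intro j' hj' i' hi' h
    have := IH j' hj' i' hi' (by omega) h
    omega
  rcases Nat.lt_or_ge j (i + 3) with hj3 | hj3
  · -- j = i+1 or i+2
    rcases (by omega : j = i + 1 ∨ j = i + 2) with rfl | rfl
    · exact absurd heq (G.ne_of_adj (walk_adj G hadj hm i (by omega)))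
    · exact absurd heq.symm (walk_nb G hadj hm i (by omega))
  · rcases Nat.eq_zero_or_pos i with rfl | hi1
    · -- i = 0 : possible loop back to start
      simp only [gseq_zero] at heq
      have hcyc : d G s = 2 → False := by
        intro hds
        set T : Set V := {y | ∃ k ≤ j - 1, gseq G s x k = y} with hT
        have hadjm : G.Adj (gseq G s x (j-1)) (gseq G s x j) := by
          have := walk_adj G hadj hm (j-1) (by omega)
          have hrw : j - 1 + 1 = j := by omega
          rwa [hrw] at this
        have hne1 : gseq G s x (j-1) ≠ gseq G s x 1 := by
          intro h
          exact noRep (j-1) (by omega) 1 (by omega) h.symm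
        have hclosed : ∀ y ∈ T, ∀ z, G.Adj y z → z ∈ T := by
          rintro y ⟨k, hk, rfl⟩ z hz
          rcases Nat.eq_zero_or_pos k with rfl | hk1
          · simp only [gseq_zero] at hz
            have hmem1 : x ∈ G.neighborSet s := hadj
            have hmemm : gseq G s x (j-1) ∈ G.neighborSet s := by
              have h' : G.Adj (gseq G s x (j-1)) s := by
                have h'' := hadjm
                rw [← heq] at h''
                exact h''
              exact h'.symm
            have := two_of (V := V) hds hmem1 hmemm
              (fun h => hne1 h.symm) (c := z) hz
            rcases this with rfl | rfl
            · exact ⟨1, by omega, rfl⟩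
            · exact ⟨j-1, by omega, rfl⟩
          · have hchar := walk_nbrchar G hadj hm k hk1 (by omega) z hz
            rcases hchar with rfl | rfl
            · exact ⟨k-1, by omega, rfl⟩
            · rcases Nat.lt_or_ge k (j-1) with hlt | hge
              · exact ⟨k+1, by omega, rfl⟩
              · have hkj : k = j - 1 := by omega
                have : k + 1 = j := by omega
                rw [this, ← heq]
                exact ⟨0, by omega, rfl⟩
        have hdeg : ∀ y ∈ T, d G y ≠ 3 := by
          rintro y ⟨k, hk, rfl⟩
          rcases Nat.eq_zero_or_pos k with rfl | hk1
          · simp only [gseq_zero]; omega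
          · have := hm k hk1 (by omega); omega
        exact closed_contra G hconn hmax' hclosed hdeg ⟨s, 0, by omega, rfl⟩
      rcases Nat.lt_or_ge m j with hmj | hmj
      · have hjm1 : j = m + 1 := by omega
        exact ⟨rfl, hjm1, hcyc⟩
      · -- j ≤ m : then d s = 2 from interior, contradiction with cycle
        have hds : d G s = 2 := by
          have := hm j (by omega) hmj
          rwa [← heq] at this
        exact absurd hds (fun h => hcyc h)
    · -- 1 ≤ i : interior repetition, impossible
      exfalso
      have hadjm : G.Adj (gseq G s x (j-1)) (gseq G s x j) := by
        have := walk_adj G hadj hm (j-1) (by omega)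
        have hrw : j - 1 + 1 = j := by omega
        rwa [hrw] at this
      have hz : G.Adj (gseq G s x i) (gseq G s x (j-1)) := by
        rw [heq]; exact hadjm.symm
      have hchar := walk_nbrchar G hadj hm i hi1 (by omega) _ hz
      rcases hchar with h | h
      · exact noRep (j-1) (by omega) (i-1) (by omega) h.symm
      · rcases Nat.lt_or_ge (i+1) (j-1) with hlt | hge
        · exact noRep (j-1) (by omega) (i+1) (by omega) h.symm
        · -- i+1 = j-1, i.e. j = i+2, contradicts hj3
          omega

lemma walk_term (hconn : G.Connected) (hmax' : ∃ v : V, d G v = 3) :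
    {k | d G (gseq G s x (k+1)) ≠ 2}.Nonempty := by
  by_contra hno
  push_neg at hno
  simp only [Set.not_nonempty_iff_eq_empty, Set.eq_empty_iff_forall_notMem,
    Set.mem_setOf_eq, not_not] at hno
  set N := Fintype.card V with hN
  have hm : ∀ j, 1 ≤ j → j ≤ N → d G (gseq G s x j) = 2 := by
    intro j hj1 _
    obtain ⟨k, rfl⟩ : ∃ k, j = k + 1 := ⟨j - 1, by omega⟩
    exact hno k
  obtain ⟨i, j, hne, heq⟩ := Fintype.exists_ne_map_eq_of_card_lt
    (fun i : Fin (N + 2) => gseq G s x i) (by simp; omega)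
  rcases Nat.lt_or_ge (i : ℕ) (j : ℕ) with hij | hij
  · obtain ⟨hi0, hjN, hds⟩ := walk_master G hadj hconn hmax' hm j i hij
      (by omega) heq
    have h2 := hno N
    rw [hi0, hjN] at heq
    simp only [gseq_zero] at heq
    rw [← heq] at h2
    exact hds h2
  · have hij' : (j : ℕ) < i := by
      rcases Nat.lt_or_ge (j : ℕ) (i : ℕ) with h | h
      · exact h
      · exact absurd (Fin.ext (by omega)) hne
    obtain ⟨hj0, hiN, hds⟩ := walk_master G hadj hconn hmax' hm i j hij'
      (by omega) heq.symm
    have h2 := hno N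
    rw [hj0, hiN] at heq
    simp only [gseq_zero] at heq
    rw [heq] at h2
    exact hds h2

end Walk

/-- index of the end of the deterministic walk -/
noncomputable def wK (s x : V) : ℕ := sInf {k | d G (gseq G s x (k+1)) ≠ 2}

/-- the end of the deterministic walk -/
noncomputable def wE (s x : V) : V := gseq G s x (wK G s x + 1)

section Walk2

variable {s x : V} (hadj : G.Adj s x)

lemma wK_min : ∀ j, 1 ≤ j → j ≤ wK G s x → d G (gseq G s x j) = 2 := by
  intro j hj1 hjK
  obtain ⟨k, rfl⟩ : ∃ k, j = k + 1 := ⟨j - 1, by omega⟩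
  unfold wK at hjK
  have : k ∉ {k | d G (gseq G s x (k+1)) ≠ 2} :=
    Nat.notMem_of_lt_sInf (by omega)
  simpa using this

include hadj

lemma wE_spec (hconn : G.Connected) (hmax' : ∃ v : V, d G v = 3) :
    d G (wE G s x) ≠ 2 :=
  Nat.sInf_mem (walk_term G hadj hconn hmax')

lemma wK_eq {k : ℕ} (hint : ∀ j, 1 ≤ j → j ≤ k → d G (gseq G s x j) = 2)
    (hstop : d G (gseq G s x (k+1)) ≠ 2) : wK G s x = k := by
  unfold wK
  have hle : sInf {k | d G (gseq G s x (k+1)) ≠ 2} ≤ k := Nat.sInf_le hstop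
  rcases eq_or_lt_of_le hle with h | h
  · exact h
  · exfalso
    have hmem := Nat.sInf_mem (⟨k, hstop⟩ :
      Set.Nonempty {k | d G (gseq G s x (k+1)) ≠ 2})
    exact hmem (hint _ (by omega) (by omega))

omit hadj in
lemma wK_zero (hx : d G x ≠ 2) : wK G s x = 0 ∧ wE G s x = x := by
  have h0 : wK G s x = 0 := by
    have h1 : (0 : ℕ) ∈ {k | d G (gseq G s x (k+1)) ≠ 2} := by simpa using hx
    exact Nat.sInf_eq_zero.mpr (Or.inl h1)
  exact ⟨h0, by rw [wE, h0]; rfl⟩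

lemma walk_adj' : ∀ k ≤ wK G s x, G.Adj (gseq G s x k) (gseq G s x (k+1)) :=
  walk_adj G hadj (wK_min G)

lemma walk_inj (hconn : G.Connected) (hmax' : ∃ v : V, d G v = 3) :
    ∀ j i, i < j → j ≤ wK G s x + 1 → gseq G s x i = gseq G s x j →
      i = 0 ∧ j = wK G s x + 1 ∧ d G s ≠ 2 :=
  walk_master G hadj hconn hmax' (wK_min G)

end Walk2

section Det

/-- determinism: any no-backtracking sequence through degree-2 interior
vertices coincides with the deterministic walk -/
lemma walk_det {f : ℕ → V} {m : ℕ} (hm1 : 1 ≤ m)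
    (hadjf : ∀ k, k < m → G.Adj (f k) (f (k+1)))
    (hnb : ∀ k, k + 2 ≤ m → f (k+2) ≠ f k)
    (hint : ∀ k, 1 ≤ k → k < m → d G (f k) = 2) :
    ∀ k ≤ m, gseq G (f 0) (f 1) k = f k := by
  intro k
  induction k using Nat.strong_induction_on with
  | _ k IH =>
  intro hk
  match k, hk with
  | 0, _ => rfl
  | 1, _ => rfl
  | (k'+2), hk => ?_
  have h1 : gseq G (f 0) (f 1) (k'+1) = f (k'+1) := IH (k'+1) (by omega) (by omega)
  have h0 : gseq G (f 0) (f 1) k' = f k' := IH k' (by omega) (by omega)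
  have hd : d G (f (k'+1)) = 2 := hint (k'+1) (by omega) (by omega)
  rw [gseq_two, h1, h0, if_pos hd]
  have hprev : G.Adj (f (k'+1)) (f k') := (hadjf k' (by omega)).symm
  have hchar := (nbr_two G hd hprev).2.2 (f (k'+2)) (hadjf (k'+1) (by omega))
  rcases hchar with h | h
  · exact absurd h (hnb k' (by omega))
  · exact h.symm

lemma walk_det_full {f : ℕ → V} {m : ℕ} (hm1 : 1 ≤ m)
    (hadjf : ∀ k, k < m → G.Adj (f k) (f (k+1)))
    (hnb : ∀ k, k + 2 ≤ m → f (k+2) ≠ f k)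
    (hint : ∀ k, 1 ≤ k → k < m → d G (f k) = 2)
    (hstop : d G (f m) ≠ 2) :
    wK G (f 0) (f 1) = m - 1 ∧ wE G (f 0) (f 1) = f m := by
  have hdet := walk_det G hm1 hadjf hnb hint
  have hKeq : wK G (f 0) (f 1) = m - 1 := by
    apply wK_eq G (hadjf 0 (by omega))
    · intro j hj1 hjm
      rw [hdet j (by omega)]
      exact hint j hj1 (by omega)
    · rw [show m - 1 + 1 = m by omega, hdet m (le_refl m)]
      exact hstop
  refine ⟨hKeq, ?_⟩
  rw [wE, hKeq, show m - 1 + 1 = m by omega]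
  exact hdet m (le_refl m)

end Det

section Shift

variable {s x : V} (hadj : G.Adj s x)
include hadj

lemma walk_shift_seq (hx2 : d G x = 2) :
    ∀ k, gseq G s x (k+1) = gseq G x (oth G x s) k := by
  intro k
  cases k with
  | zero => rfl
  | succ k =>
    show ((stepP G)^[k+1] (s,x)).2 = ((stepP G)^[k] (x, oth G x s)).2
    rw [Function.iterate_succ_apply]
    have hst : stepP G (s, x) = (x, oth G x s) := by
      simp only [stepP, if_pos hx2]
    rw [hst]

lemma walk_shift_K (hconn : G.Connected) (hmax' : ∃ v : V, d G v = 3)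
    (hx2 : d G x = 2) :
    wK G s x = wK G x (oth G x s) + 1 ∧ wE G s x = wE G x (oth G x s) := by
  have hadj' : G.Adj x (oth G x s) := (nbr_two G hx2 hadj.symm).1
  have hK : wK G s x = wK G x (oth G x s) + 1 := by
    apply wK_eq G hadj
    · intro j hj1 hjk
      match j, hj1 with
      | 1, _ => exact hx2
      | (j'+2), _ =>
        rw [walk_shift_seq G hadj hx2 (j'+1)]
        exact wK_min G (j'+1) (by omega) (by omega)
    · rw [show wK G x (oth G x s) + 1 + 1 = (wK G x (oth G x s) + 1) + 1 from rfl,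
        walk_shift_seq G hadj hx2]
      exact wE_spec G hadj' hconn hmax'
  refine ⟨hK, ?_⟩
  rw [wE, hK, walk_shift_seq G hadj hx2]
  rfl

lemma walk_rev (hconn : G.Connected) (hmax' : ∃ v : V, d G v = 3)
    (hs2 : d G s ≠ 2) :
    G.Adj (wE G s x) (gseq G s x (wK G s x)) ∧
    wK G (wE G s x) (gseq G s x (wK G s x)) = wK G s x ∧
    wE G (wE G s x) (gseq G s x (wK G s x)) = s := by
  set n := wK G s x + 1 with hn
  have hadj0 : G.Adj (wE G s x) (gseq G s x (wK G s x)) := by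
    have := walk_adj' G hadj (wK G s x) (le_refl _)
    exact this.symm
  have hfull := walk_det_full G (f := fun k => gseq G s x (n - k)) (m := n)
    (by omega)
    (by
      intro k hk
      show G.Adj (gseq G s x (n - k)) (gseq G s x (n - (k+1)))
      have h1 : n - k = (n - (k+1)) + 1 := by omega
      rw [h1]
      exact (walk_adj' G hadj (n - (k+1)) (by omega)).symm)
    (by
      intro k hk2 heq
      rcases Nat.lt_or_ge (n - (k+2)) (n - k) with hlt | hge
      · obtain ⟨h0, hn', hds⟩ := walk_inj G hadj hconn hmax' (n - k) (n - (k+2))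
          hlt (by omega) heq
        have hk0 : k = 0 ∧ n = 2 := by omega
        obtain ⟨rfl, hn2⟩ := hk0
        have hnb := walk_nb G hadj (wK_min G) 0 (by omega)
        have heq' : gseq G s x (n - 2) = gseq G s x (n - 0) := heq
        rw [show n - 2 = 0 by omega, show n - 0 = 2 by omega] at heq'
        exact hnb heq'.symm
      · omega)
    (by
      intro k hk1 hkn
      exact wK_min G (n - k) (by omega) (by omega))
    (by
      show d G (gseq G s x (n - n)) ≠ 2
      rw [Nat.sub_self]
      exact hs2)
  have hfull' : wK G (gseq G s x (n - 0)) (gseq G s x (n - 1)) = n - 1 ∧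
      wE G (gseq G s x (n - 0)) (gseq G s x (n - 1)) = gseq G s x (n - n) := hfull
  have hf0 : gseq G s x (n - 0) = wE G s x := by rw [Nat.sub_zero]; rfl
  have hf1 : gseq G s x (n - 1) = gseq G s x (wK G s x) := by
    congr 1
  rw [hf0, hf1, Nat.sub_self] at hfull'
  refine ⟨hadj0, hfull'.1.trans (by omega), hfull'.2⟩

end Shift

/-- adjacency in the contracted multigraph on degree-3 vertices -/
noncomputable def Madj (a b : V) : Prop :=
  a ≠ b ∧ d G a = 3 ∧ d G b = 3 ∧ ∃ x, G.Adj a x ∧ wE G a x = b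

lemma Madj_symm (hconn : G.Connected) (hmax' : ∃ v : V, d G v = 3) {a b : V}
    (h : Madj G a b) : Madj G b a := by
  obtain ⟨hne, h3a, h3b, x, hax, hEx⟩ := h
  have hrev := walk_rev G hax hconn hmax' (by omega)
  rw [hEx] at hrev
  exact ⟨hne.symm, h3b, h3a, gseq G a x (wK G a x), hrev.1, hrev.2.2⟩

/-- the A-path-freeness: a proper segment between degree-3 vertices has
a number of edges not divisible by 3 -/
lemma walk_nz (hA : ∀ j : ℕ, 0 < j → ¬ HasAPath G (3 * j + 1))
    (hconn : G.Connected) (hmax' : ∃ v : V, d G v = 3)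
    {s x : V} (hadj : G.Adj s x) (h3s : d G s = 3) (h3E : d G (wE G s x) = 3)
    (hne : wE G s x ≠ s) : (wK G s x + 1) % 3 ≠ 0 := by
  intro h0
  set n := wK G s x + 1 with hn
  have hn3 : 3 ≤ n := by omega
  have hj : 3 * (n / 3) + 1 = n + 1 := by omega
  apply hA (n / 3) (by omega)
  rw [hj]
  refine ⟨fun a => gseq G s x a, ?_, ?_, ?_, ?_, ?_⟩
  · intro a b ha hb heq
    have heq' : gseq G s x a = gseq G s x b := heq
    rcases Nat.lt_trichotomy a b with h | h | h
    · obtain ⟨h1, h2, h3⟩ := walk_inj G hadj hconn hmax' b a h (by omega) heq'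
      exfalso
      apply hne
      rw [h1, h2] at heq'
      exact heq'.symm
    · exact h
    · obtain ⟨h1, h2, h3⟩ := walk_inj G hadj hconn hmax' a b h (by omega) heq'.symm
      exfalso
      apply hne
      rw [h1, h2] at heq'
      exact heq' 
  · intro a ha
    exact walk_adj' G hadj a (by omega)
  · intro a ha0 ha1
    exact wK_min G a (by omega) (by omega)
  · exact h3s
  · rw [show n + 1 - 1 = wK G s x + 1 from rfl]
    exact h3E

section Pendant

variable (hone : ∃ v : V, d G v = 1)

/-- the degree-1 vertex -/
noncomputable def u0 : V := hone.choose

lemma u0_deg : d G (u0 G hone) = 1 := hone.choose_spec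

lemma u0_nbr_ex : ∃ w, G.Adj (u0 G hone) w := by
  have h : (G.neighborSet (u0 G hone)).ncard = 1 := u0_deg G hone
  have h2 : (G.neighborSet (u0 G hone)).Nonempty := by
    apply Set.nonempty_of_ncard_ne_zero
    omega
  exact h2

/-- the unique neighbor of the degree-1 vertex -/
noncomputable def xu : V := (u0_nbr_ex G hone).choose

lemma xu_adj : G.Adj (u0 G hone) (xu G hone) := (u0_nbr_ex G hone).choose_spec

/-- the degree-3 vertex where the pendant path attaches -/
noncomputable def t0 : V := wE G (u0 G hone) (xu G hone)

lemma t0_deg (hconn : G.Connected) (hmax : ∀ v : V, d G v ≤ 3)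
    (hmax' : ∃ v : V, d G v = 3) : d G (t0 G hone) = 3 := by
  set u := u0 G hone
  set xx := xu G hone
  have hadj : G.Adj u xx := xu_adj G hone
  have hne2 : d G (t0 G hone) ≠ 2 := wE_spec G hadj hconn hmax'
  have hpos : 0 < d G (t0 G hone) := by
    have := (walk_adj' G hadj (wK G u xx) (le_refl _)).symm
    exact d_pos G this
  have hne1 : d G (t0 G hone) ≠ 1 := by
    intro h1
    set T : Set V := {y | ∃ k ≤ wK G u xx + 1, gseq G u xx k = y} with hT
    have hclosed : ∀ y ∈ T, ∀ z, G.Adj y z → z ∈ T := by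
      rintro y ⟨k, hk, rfl⟩ z hz
      rcases Nat.eq_zero_or_pos k with rfl | hk1
      · have := nbr_one G (u0_deg G hone) hadj z hz
        exact ⟨1, by omega, by rw [this]; rfl⟩
      · rcases Nat.lt_or_ge k (wK G u xx + 1) with hlt | hge
        · have hchar := walk_nbrchar G (m := wK G u xx) hadj (wK_min G) k hk1
            (by omega) z hz
          rcases hchar with rfl | rfl
          · exact ⟨k-1, by omega, rfl⟩
          · exact ⟨k+1, by omega, rfl⟩
        · have hkK : k = wK G u xx + 1 := by omega
          subst hkK
          have hadjE : G.Adj (gseq G u xx (wK G u xx + 1)) (gseq G u xx (wK G u xx)) :=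
            (walk_adj' G hadj (wK G u xx) (le_refl _)).symm
          have := nbr_one G h1 hadjE z hz
          exact ⟨wK G u xx, by omega, by rw [this]⟩
    have hdeg : ∀ y ∈ T, d G y ≠ 3 := by
      rintro y ⟨k, hk, rfl⟩
      rcases Nat.eq_zero_or_pos k with rfl | hk1
      · have hu1 : d G (gseq G u xx 0) = 1 := u0_deg G hone
        omega
      · rcases Nat.lt_or_ge k (wK G u xx + 1) with hlt | hge
        · have := wK_min G (s := u) (x := xx) k hk1 (by omega)
          omega
        · have hkK : k = wK G u xx + 1 := by omega
          subst hkK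
          have h1' : d G (gseq G u xx (wK G u xx + 1)) = 1 := h1
          omega
    exact closed_contra G hconn hmax' hclosed hdeg ⟨u, 0, by omega, rfl⟩
  have := hmax (t0 G hone)
  omega

/-- the neighbor of t0 in the direction of the pendant path -/
noncomputable def z0 : V := gseq G (u0 G hone) (xu G hone) (wK G (u0 G hone) (xu G hone))

lemma z0_spec (hconn : G.Connected) (hmax' : ∃ v : V, d G v = 3) :
    G.Adj (t0 G hone) (z0 G hone) ∧ wE G (t0 G hone) (z0 G hone) = u0 G hone := by
  have hadj : G.Adj (u0 G hone) (xu G hone) := xu_adj G hone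
  have h1 : d G (u0 G hone) ≠ 2 := by have := u0_deg G hone; omega
  have := walk_rev G hadj hconn hmax' h1
  exact ⟨this.1, this.2.2⟩

/-- every non-endpoint vertex has a neighbor strictly closer to the target -/
lemma exists_closer (hconn : G.Connected) {v w : V} (hne : v ≠ w) :
    ∃ y, G.Adj v y ∧ G.dist y w + 1 = G.dist v w := by
  obtain ⟨p, hp⟩ := (hconn.preconnected v w).exists_walk_length_eq_dist
  cases p with
  | nil => exact absurd rfl hne
  | @cons _ y _ h q =>
    refine ⟨y, h, ?_⟩
    have h1 : G.dist y w ≤ q.length := dist_le q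
    have h2 : G.dist v w ≤ G.dist y w + 1 := by
      obtain ⟨r, hr⟩ := (SimpleGraph.Walk.reachable q).exists_walk_length_eq_dist
      have := dist_le (SimpleGraph.Walk.cons h r)
      simpa [hr] using this
    simp only [SimpleGraph.Walk.length_cons] at hp
    omega

/-- descent: any degree-3 vertex other than t0 has an M-neighbor closer to t0 -/
lemma desc (hconn : G.Connected) (hmax : ∀ v : V, d G v ≤ 3)
    (hmax' : ∃ v : V, d G v = 3) {v : V} (h3 : d G v = 3)
    (hne : v ≠ t0 G hone) :
    ∃ e, Madj G v e ∧ G.dist e (t0 G hone) < G.dist v (t0 G hone) := by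
  set t := t0 G hone with ht
  have ht3 : d G t = 3 := t0_deg G hone hconn hmax hmax'
  set n := G.dist v t with hn
  obtain ⟨y, hvy, hy⟩ := exists_closer G hconn hne
  by_cases hy2 : d G y = 2
  · -- walk through degree-2 vertices
    have claim : ∀ k, k ≤ wK G v y →
        (G.dist (gseq G v y k) t + k = n ∧
         G.dist (gseq G v y (k+1)) t + (k+1) = n) := by
      intro k
      induction k with
      | zero =>
        intro _
        exact ⟨by simpa using hn.symm, by simpa using hy⟩
      | succ k ih =>
        intro hk
        have ihh := ih (by omega)
        refine ⟨ihh.2, ?_⟩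
        have hd2 : d G (gseq G v y (k+1)) = 2 := wK_min G (k+1) (by omega) hk
        have hnet : gseq G v y (k+1) ≠ t := by
          intro h
          rw [h] at hd2
          omega
        obtain ⟨z, hz, hzd⟩ := exists_closer G hconn hnet
        have hchar := walk_nbrchar G (m := wK G v y) hvy (wK_min G) (k+1)
          (by omega) hk z hz
        rcases hchar with rfl | rfl
        · exfalso
          have h1 := ihh.1
          simp only [Nat.add_sub_cancel] at hzd
          omega
        · have := ihh.2
          omega
    have hKle := claim (wK G v y) (le_refl _)
    set e := wE G v y with he
    have hdiste : G.dist e t + (wK G v y + 1) = n := hKle.2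
    have he2 : d G e ≠ 2 := wE_spec G hvy hconn hmax'
    have hepos : 0 < d G e := d_pos G (walk_adj' G hvy (wK G v y) (le_refl _)).symm
    have he1 : d G e ≠ 1 := by
      intro h1
      have hnet : e ≠ t := by intro h; rw [h] at h1; omega
      obtain ⟨z, hz, hzd⟩ := exists_closer G hconn hnet
      have hzeq := nbr_one G h1 ((walk_adj' G hvy (wK G v y) (le_refl _)).symm) z hz
      subst hzeq
      have := hKle.1
      omega
    have he3 : d G e = 3 := by have := hmax e; omega
    have hnev : e ≠ v := by
      intro h
      rw [h] at hdiste
      omega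
    exact ⟨e, ⟨hnev.symm, h3, he3, y, hvy, rfl⟩, by omega⟩
  · -- y itself has degree ≠ 2, so it is the M-neighbor
    have hy0 : 0 < d G y := d_pos G hvy.symm
    have hy1 : d G y ≠ 1 := by
      intro h1
      have hnet : y ≠ t := by intro h; rw [h] at h1; omega
      obtain ⟨z, hz, hzd⟩ := exists_closer G hconn hnet
      have hzeq := nbr_one G h1 hvy.symm z hz
      subst hzeq
      omega
    have hy3 : d G y = 3 := by have := hmax y; omega
    have hney : y ≠ v := by intro h; rw [h] at hy; omega
    exact ⟨y, ⟨hney.symm, h3, hy3, y, hvy, (wK_zero G hy2).2⟩, by omega⟩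

/-- an arbitrary injective enumeration of vertices -/
noncomputable def idx : V → ℕ := fun v => ((Fintype.equivFin V) v : ℕ)

lemma idx_lt (v : V) : idx v < Fintype.card V := ((Fintype.equivFin V) v).2

lemma idx_inj {v w : V} (h : idx v = idx w) : v = w := by
  have := (Fintype.equivFin V).injective (Fin.ext h)
  exact this

lemma dist_lt_card (hconn : G.Connected) (v w : V) :
    G.dist v w < Fintype.card V := by
  classical
  obtain ⟨p⟩ := hconn.preconnected v w
  have h1 : G.dist v w ≤ (p.toPath : G.Walk v w).length := dist_le _
  have h2 := (p.toPath.2).length_lt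
  omega

/-- the priority: vertices farther from t0 are colored first -/
noncomputable def mu : V → ℕ := fun v =>
  (Fintype.card V - G.dist v (t0 G hone)) * Fintype.card V + idx v

lemma mu_inj {v w : V} (h : mu G hone v = mu G hone w) : v = w := by
  have hv := idx_lt (V := V) v
  have hw := idx_lt (V := V) w
  apply idx_inj (V := V)
  unfold mu at h
  set N := Fintype.card V with hN
  have e1 : ((N - G.dist v (t0 G hone)) * N + idx v) % N = idx v := by
    rw [Nat.add_comm, Nat.add_mul_mod_self_right]
    exact Nat.mod_eq_of_lt hv
  have e2 : ((N - G.dist w (t0 G hone)) * N + idx w) % N = idx w := by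
    rw [Nat.add_comm, Nat.add_mul_mod_self_right]
    exact Nat.mod_eq_of_lt hw
  rw [h, e2] at e1
  exact e1.symm

lemma mu_lt (hconn : G.Connected) {v w : V}
    (h : G.dist w (t0 G hone) < G.dist v (t0 G hone)) :
    mu G hone v < mu G hone w := by
  have hv := idx_lt (V := V) v
  have hw := idx_lt (V := V) w
  have hdv := dist_lt_card G hconn v (t0 G hone)
  unfold mu
  set N := Fintype.card V
  have h1 : N - G.dist v (t0 G hone) + 1 ≤ N - G.dist w (t0 G hone) := by omega
  have h2 : (N - G.dist v (t0 G hone) + 1) * N ≤ (N - G.dist w (t0 G hone)) * N :=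
    Nat.mul_le_mul_right N h1
  have h3 : (N - G.dist v (t0 G hone) + 1) * N
      = (N - G.dist v (t0 G hone)) * N + N := by ring
  omega

open Classical in
/-- the greedy coloring of degree-3 vertices -/
noncomputable def col : V → ZMod 3 :=
  WellFounded.fix (measure (mu G hone)).wf
    (fun v ih =>
      if h : ∃ c : ZMod 3, ∀ w, ∀ hw : mu G hone w < mu G hone v,
          Madj G v w → ih w hw ≠ c
      then h.choose else 0)

open Classical in
lemma col_unfold (v : V) : col G hone v =
    if h : ∃ c : ZMod 3, ∀ w, ∀ _ : mu G hone w < mu G hone v,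
        Madj G v w → col G hone w ≠ c
    then h.choose else 0 := by
  rw [col, WellFounded.fix_eq]

lemma col_ne_aux (hconn : G.Connected) (hmax : ∀ v : V, d G v ≤ 3)
    (hmax' : ∃ v : V, d G v = 3) {v w : V} (hM : Madj G v w)
    (hmu : mu G hone w < mu G hone v) : col G hone v ≠ col G hone w := by
  classical
  set B : Set V := {w' | Madj G v w' ∧ mu G hone w' < mu G hone v} with hB
  have hBcard : B.ncard ≤ 2 := by
    by_cases hv : v = t0 G hone
    · -- t0 has at most 2 useful directions
      subst hv
      have hz0 := z0_spec G hone hconn hmax'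
      have hsub : B ⊆ (fun y => wE G (t0 G hone) y) ''
          (G.neighborSet (t0 G hone) \ {z0 G hone}) := by
        rintro b ⟨⟨hne, h3v, h3b, y, hy, hEy⟩, _⟩
        refine ⟨y, ⟨hy, ?_⟩, hEy⟩
        intro hyz
        simp only [Set.mem_singleton_iff] at hyz
        subst hyz
        rw [hz0.2] at hEy
        rw [← hEy] at h3b
        have := u0_deg G hone
        omega
      have hd : (G.neighborSet (t0 G hone) \ {z0 G hone}).ncard = 2 := by
        have h3 : (G.neighborSet (t0 G hone)).ncard = 3 :=
          t0_deg G hone hconn hmax hmax'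
        have hzmem : z0 G hone ∈ G.neighborSet (t0 G hone) := hz0.1
        rw [Set.ncard_diff_singleton_of_mem hzmem, h3]
      calc B.ncard ≤ _ := Set.ncard_le_ncard hsub (Set.toFinite _)
        _ ≤ _ := Set.ncard_image_le (Set.toFinite _)
        _ = 2 := hd
    · -- otherwise exclude the descent direction
      obtain ⟨e, hMe, hde⟩ := desc G hone hconn hmax hmax' hM.2.1 hv
      have hmue : mu G hone v < mu G hone e := mu_lt G hone hconn hde
      have hsub : B ⊆ ((fun y => wE G v y) '' (G.neighborSet v)) \ {e} := by
        rintro b ⟨⟨hne, h3v, h3b, y, hy, hEy⟩, hmub⟩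
        refine ⟨⟨y, hy, hEy⟩, ?_⟩
        intro hbe
        simp only [Set.mem_singleton_iff] at hbe
        subst hbe
        omega
      have hmem : e ∈ (fun y => wE G v y) '' (G.neighborSet v) := by
        obtain ⟨_, _, _, y, hy, hEy⟩ := hMe
        exact ⟨y, hy, hEy⟩
      have himg : ((fun y => wE G v y) '' (G.neighborSet v)).ncard ≤ 3 := by
        calc _ ≤ (G.neighborSet v).ncard := Set.ncard_image_le (Set.toFinite _)
          _ ≤ 3 := hmax v
      calc B.ncard ≤ _ := Set.ncard_le_ncard hsub (Set.toFinite _)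
        _ = ((fun y => wE G v y) '' (G.neighborSet v)).ncard - 1 :=
            Set.ncard_diff_singleton_of_mem hmem
        _ ≤ 2 := by omega
  -- there is a fresh color
  have hused : (col G hone '' B).ncard ≤ 2 :=
    le_trans (Set.ncard_image_le (Set.toFinite _)) hBcard
  have hfresh : ∃ c : ZMod 3, ∀ w', ∀ _ : mu G hone w' < mu G hone v,
      Madj G v w' → col G hone w' ≠ c := by
    have huniv : (Set.univ : Set (ZMod 3)).ncard = 3 := by
      rw [Set.ncard_univ]
      simp [Nat.card_eq_fintype_card]
    have hne : col G hone '' B ≠ Set.univ := by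
      intro h
      rw [h, huniv] at hused
      omega
    obtain ⟨c, hc⟩ := (Set.ne_univ_iff_exists_notMem _).mp hne
    refine ⟨c, fun w' hw' hMw' hcol => hc ?_⟩
    exact ⟨w', ⟨hMw', hw'⟩, hcol⟩
  rw [col_unfold, dif_pos hfresh]
  intro hcontra
  exact hfresh.choose_spec w hmu hM hcontra.symm

/-- the greedy coloring is proper on the contracted graph -/
lemma col_ne (hconn : G.Connected) (hmax : ∀ v : V, d G v ≤ 3)
    (hmax' : ∃ v : V, d G v = 3) {v w : V} (hM : Madj G v w) :
    col G hone v ≠ col G hone w := by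
  rcases Nat.lt_trichotomy (mu G hone w) (mu G hone v) with h | h | h
  · exact col_ne_aux G hone hconn hmax hmax' hM h
  · exact absurd (mu_inj G hone h.symm) hM.1
  · exact fun hc =>
      col_ne_aux G hone hconn hmax hmax' (Madj_symm G hconn hmax' hM) h hc.symm

end Pendant

section Splice

variable {v a b : V}

/-- full injectivity for walks started at a degree-2 vertex -/
lemma walk_inj2 (hconn : G.Connected) (hmax' : ∃ v : V, d G v = 3)
    {w y : V} (hvy : G.Adj w y) (h2 : d G w = 2) :
    ∀ i j, i < j → j ≤ wK G w y + 1 → gseq G w y i ≠ gseq G w y j := by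
  intro i j hij hj heq
  obtain ⟨_, _, hd⟩ := walk_inj G hvy hconn hmax' j i hij hj heq
  exact hd h2

lemma wK_pos (hconn : G.Connected) (hmax' : ∃ v : V, d G v = 3)
    {s y : V} (hadj : G.Adj s y) (h2 : d G y = 2) : 1 ≤ wK G s y := by
  by_contra h
  have h0 : wK G s y = 0 := by omega
  have hspec := wE_spec G hadj hconn hmax'
  have hE : wE G s y = y := by rw [wE, h0]; rfl
  rw [hE] at hspec
  exact hspec h2

lemma oth_eq {w p q : V} (h2 : d G w = 2) (hp : G.Adj w p) (hq : G.Adj w q)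
    (hpq : q ≠ p) : oth G w p = q := by
  rcases (nbr_two G h2 hp).2.2 q hq with h | h
  · exact absurd h hpq
  · exact h.symm

lemma end_deg (hconn : G.Connected) (hmax : ∀ v : V, d G v ≤ 3)
    (hmax' : ∃ v : V, d G v = 3) {s y : V} (hadj : G.Adj s y) :
    d G (wE G s y) = 1 ∨ d G (wE G s y) = 3 := by
  have h2 := wE_spec G hadj hconn hmax'
  have hpos : 0 < d G (wE G s y) :=
    d_pos G (walk_adj' G hadj (wK G s y) (le_refl _)).symm
  have := hmax (wE G s y)
  omega

/-- the spliced full segment through a degree-2 vertex -/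
noncomputable def Fsp (v a b : V) (k : ℕ) : V :=
  if k ≤ wK G v a + 1 then gseq G v a (wK G v a + 1 - k)
  else gseq G v b (k - (wK G v a + 1))

lemma Fsp_zero : Fsp G v a b 0 = wE G v a := by
  rw [Fsp, if_pos (by omega)]
  rfl

lemma Fsp_mid : Fsp G v a b (wK G v a + 1) = v := by
  rw [Fsp, if_pos (le_refl _), Nat.sub_self]
  rfl

lemma Fsp_last : Fsp G v a b (wK G v a + wK G v b + 2) = wE G v b := by
  rw [Fsp, if_neg (by omega)]
  have h1 : wK G v a + wK G v b + 2 - (wK G v a + 1) = wK G v b + 1 := by omega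
  rw [h1]
  rfl

lemma Fsp_B {k : ℕ} (hk : wK G v a + 1 ≤ k) :
    Fsp G v a b k = gseq G v b (k - (wK G v a + 1)) := by
  rcases Nat.lt_or_ge (wK G v a + 1) k with h | h
  · rw [Fsp, if_neg (by omega)]
  · have heq : k = wK G v a + 1 := by omega
    subst heq
    rw [Nat.sub_self]
    exact Fsp_mid G

variable (h2 : d G v = 2) (ha : G.Adj v a) (hb : G.Adj v b) (hab : a ≠ b)
include h2 ha hb hab

lemma Fsp_adj : ∀ k, k < wK G v a + wK G v b + 2 →
    G.Adj (Fsp G v a b k) (Fsp G v a b (k+1)) := by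
  intro k hk
  rcases Nat.lt_or_ge k (wK G v a + 1) with hA | hB
  · rw [Fsp, if_pos (by omega), Fsp, if_pos (by omega)]
    have h1 : wK G v a + 1 - k = (wK G v a + 1 - (k+1)) + 1 := by omega
    rw [h1]
    exact (walk_adj' G ha (wK G v a + 1 - (k+1)) (by omega)).symm
  · rw [Fsp_B G hB, Fsp_B G (by omega)]
    have h1 : k + 1 - (wK G v a + 1) = (k - (wK G v a + 1)) + 1 := by omega
    rw [h1]
    exact walk_adj' G hb (k - (wK G v a + 1)) (by omega)

lemma Fsp_int : ∀ k, 1 ≤ k → k < wK G v a + wK G v b + 2 →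
    d G (Fsp G v a b k) = 2 := by
  intro k hk1 hkn
  rcases Nat.lt_or_ge k (wK G v a + 1) with hA | hB
  · rw [Fsp, if_pos (by omega)]
    rcases Nat.eq_zero_or_pos (wK G v a + 1 - k) with h0 | hpos
    · rw [h0]; exact h2
    · exact wK_min G (wK G v a + 1 - k) (by omega) (by omega)
  · rw [Fsp_B G hB]
    rcases Nat.eq_zero_or_pos (k - (wK G v a + 1)) with h0 | hpos
    · rw [h0]; exact h2
    · exact wK_min G (k - (wK G v a + 1)) (by omega) (by omega)

lemma Fsp_nb (hconn : G.Connected) (hmax' : ∃ v : V, d G v = 3) :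
    ∀ k, k + 2 ≤ wK G v a + wK G v b + 2 →
    Fsp G v a b (k+2) ≠ Fsp G v a b k := by
  intro k hk
  rcases Nat.lt_or_ge (k+2) (wK G v a + 2) with hA | hB
  · -- both in A part
    rw [Fsp, if_pos (by omega), Fsp, if_pos (by omega)]
    intro heq
    exact walk_inj2 G hconn hmax' ha h2 (wK G v a + 1 - (k+2))
      (wK G v a + 1 - k) (by omega) (by omega) heq
  · rcases Nat.eq_or_lt_of_le (by omega : wK G v a ≤ k) with heqk | hlt
    · -- k = kA : crossing: a vs b
      rw [← heqk]
      rw [Fsp_B G (show wK G v a + 1 ≤ wK G v a + 2 by omega),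
        Fsp, if_pos (show wK G v a ≤ wK G v a + 1 by omega)]
      rw [show wK G v a + 2 - (wK G v a + 1) = 1 by omega,
        show wK G v a + 1 - wK G v a = 1 by omega]
      simp only [gseq_one]
      exact fun h => hab h.symm
    · -- k ≥ kA + 1 : both in B part
      rw [Fsp_B G (by omega), Fsp_B G (by omega)]
      have h1 : k + 2 - (wK G v a + 1) = (k - (wK G v a + 1)) + 2 := by omega
      rw [h1]
      exact fun h => walk_inj2 G hconn hmax' hb h2 (k - (wK G v a + 1))
        (k - (wK G v a + 1) + 2) (by omega) (by omega) h.symm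

lemma Fsp_det (hconn : G.Connected) (hmax' : ∃ v : V, d G v = 3) :
    (∀ k ≤ wK G v a + wK G v b + 2,
      gseq G (Fsp G v a b 0) (Fsp G v a b 1) k = Fsp G v a b k) ∧
    wK G (Fsp G v a b 0) (Fsp G v a b 1) = wK G v a + wK G v b + 1 ∧
    wE G (Fsp G v a b 0) (Fsp G v a b 1) = wE G v b := by
  have hstop : d G (Fsp G v a b (wK G v a + wK G v b + 2)) ≠ 2 := by
    rw [Fsp_last G]
    exact wE_spec G hb hconn hmax'
  have hfull := walk_det_full G (f := Fsp G v a b) (m := wK G v a + wK G v b + 2)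
    (by omega) (Fsp_adj G h2 ha hb hab)
    (Fsp_nb G h2 ha hb hab hconn hmax') (Fsp_int G h2 ha hb hab) hstop
  refine ⟨walk_det G (by omega) (Fsp_adj G h2 ha hb hab)
    (Fsp_nb G h2 ha hb hab hconn hmax') (Fsp_int G h2 ha hb hab), ?_, ?_⟩
  · have hh := hfull.1
    omega
  · rw [hfull.2, Fsp_last G]

lemma Fsp_inj (hconn : G.Connected) (hmax' : ∃ v : V, d G v = 3) :
    ∀ i j, i < j → j ≤ wK G v a + wK G v b + 2 →
    Fsp G v a b i = Fsp G v a b j →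
    i = 0 ∧ j = wK G v a + wK G v b + 2 ∧ d G (wE G v a) ≠ 2 := by
  intro i j hij hj heq
  have hdet := Fsp_det G h2 ha hb hab hconn hmax'
  have hK := hdet.2.1
  have hadj01 : G.Adj (Fsp G v a b 0) (Fsp G v a b 1) :=
    Fsp_adj G h2 ha hb hab 0 (by omega)
  have h1 : gseq G (Fsp G v a b 0) (Fsp G v a b 1) i
      = gseq G (Fsp G v a b 0) (Fsp G v a b 1) j := by
    rw [hdet.1 i (by omega), hdet.1 j hj, heq]
  obtain ⟨hi0, hjn, hd⟩ := walk_inj G hadj01 hconn hmax' j i hij (by omega) h1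
  rw [Fsp_zero G] at hd
  exact ⟨hi0, by omega, hd⟩

/-- the ends of a full segment cannot both have degree 1 -/
lemma Fsp_not11 (hconn : G.Connected) (hmax' : ∃ v : V, d G v = 3) :
    ¬ (d G (wE G v a) = 1 ∧ d G (wE G v b) = 1) := by
  rintro ⟨h1a, h1b⟩
  have hclosed : ∀ y ∈ {y | ∃ k ≤ wK G v a + wK G v b + 2, Fsp G v a b k = y},
      ∀ z, G.Adj y z → z ∈ {y | ∃ k ≤ wK G v a + wK G v b + 2, Fsp G v a b k = y} := by
    rintro y ⟨k, hk, rfl⟩ z hz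
    rcases Nat.eq_zero_or_pos k with rfl | hk1
    · rw [Fsp_zero G] at hz
      have hadj0 : G.Adj (wE G v a) (Fsp G v a b 1) := by
        have hh := Fsp_adj G h2 ha hb hab 0 (by omega)
        rwa [Fsp_zero G] at hh
      have hzeq := nbr_one G h1a hadj0 z hz
      exact ⟨1, by omega, hzeq.symm⟩
    · rcases Nat.lt_or_ge k (wK G v a + wK G v b + 2) with hlt | hge
      · have hd2 : d G (Fsp G v a b k) = 2 := Fsp_int G h2 ha hb hab k hk1 hlt
        have hprev : G.Adj (Fsp G v a b k) (Fsp G v a b (k-1)) := by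
          have hh := Fsp_adj G h2 ha hb hab (k-1) (by omega)
          rw [show k - 1 + 1 = k by omega] at hh
          exact hh.symm
        rcases (nbr_two G hd2 hprev).2.2 z hz with rfl | hzz
        · exact ⟨k-1, by omega, rfl⟩
        · have hnext : G.Adj (Fsp G v a b k) (Fsp G v a b (k+1)) :=
            Fsp_adj G h2 ha hb hab k hlt
          rcases (nbr_two G hd2 hprev).2.2 _ hnext with hh | hh
          · exfalso
            have hnb := Fsp_nb G h2 ha hb hab hconn hmax' (k-1) (by omega)
            rw [show k - 1 + 2 = k + 1 by omega] at hnb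
            exact hnb hh
          · rw [hzz, ← hh]
            exact ⟨k+1, by omega, rfl⟩
      · have hkn : k = wK G v a + wK G v b + 2 := by omega
        subst hkn
        rw [Fsp_last G] at hz
        have hadjn : G.Adj (wE G v b) (Fsp G v a b (wK G v a + wK G v b + 1)) := by
          have hh := Fsp_adj G h2 ha hb hab (wK G v a + wK G v b + 1) (by omega)
          rw [show wK G v a + wK G v b + 1 + 1 = wK G v a + wK G v b + 2 by omega,
            Fsp_last G] at hh
          exact hh.symm
        have hzeq := nbr_one G h1b hadjn z hz
        exact ⟨wK G v a + wK G v b + 1, by omega, hzeq.symm⟩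
  have hdeg : ∀ y ∈ {y | ∃ k ≤ wK G v a + wK G v b + 2, Fsp G v a b k = y},
      d G y ≠ 3 := by
    rintro y ⟨k, hk, rfl⟩
    rcases Nat.eq_zero_or_pos k with rfl | hk1
    · rw [Fsp_zero G]; omega
    · rcases Nat.lt_or_ge k (wK G v a + wK G v b + 2) with hlt | hge
      · have := Fsp_int G h2 ha hb hab k hk1 hlt
        omega
      · have hkn : k = wK G v a + wK G v b + 2 := by omega
        subst hkn
        rw [Fsp_last G]
        omega
  exact closed_contra G hconn hmax' hclosed hdeg
    ⟨v, wK G v a + 1, by omega, Fsp_mid G⟩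

lemma Fsp_nbrchar (hconn : G.Connected) (hmax' : ∃ v : V, d G v = 3) :
    ∀ k, 1 ≤ k → k < wK G v a + wK G v b + 2 → ∀ w, G.Adj (Fsp G v a b k) w →
      w = Fsp G v a b (k-1) ∨ w = Fsp G v a b (k+1) := by
  intro k hk1 hkn w hw
  have hd2 : d G (Fsp G v a b k) = 2 := Fsp_int G h2 ha hb hab k hk1 hkn
  have hprev : G.Adj (Fsp G v a b k) (Fsp G v a b (k-1)) := by
    have hh := Fsp_adj G h2 ha hb hab (k-1) (by omega)
    rw [show k - 1 + 1 = k by omega] at hh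
    exact hh.symm
  have hnext : G.Adj (Fsp G v a b k) (Fsp G v a b (k+1)) :=
    Fsp_adj G h2 ha hb hab k hkn
  have hne : Fsp G v a b (k+1) ≠ Fsp G v a b (k-1) := by
    intro hh
    have hnb := Fsp_nb G h2 ha hb hab hconn hmax' (k-1) (by omega)
    rw [show k - 1 + 2 = k + 1 by omega] at hnb
    exact hnb hh
  rcases (nbr_two G hd2 hprev).2.2 w hw with hh | hh
  · exact Or.inl hh
  · right
    rw [hh, oth_eq G hd2 hprev hnext hne]

lemma Fsp_Madj (hconn : G.Connected) (hmax' : ∃ v : V, d G v = 3)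
    (h3a : d G (wE G v a) = 3) (h3b : d G (wE G v b) = 3)
    (hne : wE G v a ≠ wE G v b) : Madj G (wE G v a) (wE G v b) := by
  have hdet := Fsp_det G h2 ha hb hab hconn hmax'
  have hE := hdet.2.2
  have hadj0 : G.Adj (wE G v a) (Fsp G v a b 1) := by
    have hh := Fsp_adj G h2 ha hb hab 0 (by omega)
    rwa [Fsp_zero G] at hh
  refine ⟨hne, h3a, h3b, Fsp G v a b 1, hadj0, ?_⟩
  rw [← hE, Fsp_zero G]

lemma Fsp_nz (hA : ∀ j : ℕ, 0 < j → ¬ HasAPath G (3 * j + 1))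
    (hconn : G.Connected) (hmax' : ∃ v : V, d G v = 3)
    (h3a : d G (wE G v a) = 3) (h3b : d G (wE G v b) = 3)
    (hne : wE G v a ≠ wE G v b) : (wK G v a + wK G v b + 2) % 3 ≠ 0 := by
  have hdet := Fsp_det G h2 ha hb hab hconn hmax'
  have hadj0 : G.Adj (Fsp G v a b 0) (Fsp G v a b 1) :=
    Fsp_adj G h2 ha hb hab 0 (by omega)
  have hnz := walk_nz G hA hconn hmax' hadj0
    (by rw [Fsp_zero G]; exact h3a)
    (by rw [hdet.2.2]; exact h3b)
    (by rw [hdet.2.2, Fsp_zero G]; exact hne.symm)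
  rw [hdet.2.1] at hnz
  intro hcon
  exact hnz (by omega)

/-- loops in the contracted graph are triangles (claw-freeness) -/
lemma Fsp_loop (hconn : G.Connected) (hmax : ∀ v : V, d G v ≤ 3)
    (hmax' : ∃ v : V, d G v = 3) (hclaw : ClawFree G)
    (hloop : wE G v a = wE G v b) :
    wK G v a + wK G v b = 1 ∧ d G (wE G v a) = 3 := by
  set kA := wK G v a with hkA
  set kB := wK G v b with hkB
  have hinj := Fsp_inj G h2 ha hb hab hconn hmax'
  have hn2 : 2 ≤ kA + kB + 2 := by omega
  have hn3 : 3 ≤ kA + kB + 2 := by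
    rcases Nat.lt_or_ge (kA + kB + 2) 3 with hlt | hge
    · exfalso
      have hA0 : kA = 0 := by omega
      have hB0 : kB = 0 := by omega
      have hEa : wE G v a = a := by rw [wE, ← hkA, hA0]; rfl
      have hEb : wE G v b = b := by rw [wE, ← hkB, hB0]; rfl
      rw [hEa, hEb] at hloop
      exact hab hloop
    · exact hge
  have hF0 : Fsp G v a b 0 = wE G v a := Fsp_zero G
  have hFn : Fsp G v a b (kA + kB + 2) = wE G v a := by
    rw [Fsp_last G, hloop]
  -- distinct neighbors of s
  have hne1 : Fsp G v a b 1 ≠ Fsp G v a b (kA + kB + 1) := by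
    intro hh
    have := hinj 1 (kA + kB + 1) (by omega) (by omega) hh
    omega
  have hadj1 : G.Adj (wE G v a) (Fsp G v a b 1) := by
    have hh := Fsp_adj G h2 ha hb hab 0 (by omega)
    rwa [hF0] at hh
  have hadjn : G.Adj (wE G v a) (Fsp G v a b (kA + kB + 1)) := by
    have hh := Fsp_adj G h2 ha hb hab (kA + kB + 1) (by omega)
    rw [show kA + kB + 1 + 1 = kA + kB + 2 by omega, hFn] at hh
    exact hh.symm
  have hd3 : d G (wE G v a) = 3 := by
    have hset : 1 < (G.neighborSet (wE G v a)).ncard := by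
      apply Set.one_lt_ncard_iff (Set.toFinite _) |>.mpr
      exact ⟨Fsp G v a b 1, Fsp G v a b (kA + kB + 1), hadj1, hadjn, hne1⟩
    have hne2' : d G (wE G v a) ≠ 2 := by
      rw [← Fsp_zero G (v := v) (a := a) (b := b)]
      have := wE_spec G ha hconn hmax'
      rw [Fsp_zero G]
      exact this
    have := hmax (wE G v a)
    unfold d at *
    omega
  refine ⟨?_, hd3⟩
  by_contra hno
  have hn4 : 4 ≤ kA + kB + 2 := by omega
  -- get the third neighbor z
  obtain ⟨z, hzmem, hz1, hzn⟩ := three_of (V := V) hd3 hadj1 hadjn hne1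
  have hzadj : G.Adj (wE G v a) z := hzmem
  have hzs : z ≠ wE G v a := fun hh => G.loopless.irrefl _ (hh ▸ hzadj)
  -- no adjacency among the three
  have hchar := Fsp_nbrchar G h2 ha hb hab hconn hmax'
  have hnadj1n : ¬ G.Adj (Fsp G v a b 1) (Fsp G v a b (kA + kB + 1)) := by
    intro hadj'
    rcases hchar 1 (by omega) (by omega) _ hadj' with hh | hh
    · rw [show (1:ℕ) - 1 = 0 by omega, hF0] at hh
      have := hinj 0 (kA + kB + 1) (by omega) (by omega) hh.symm
      omega
    · have := hinj 2 (kA + kB + 1) (by omega) (by omega) hh.symm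
      omega
  have hnadj1z : ¬ G.Adj (Fsp G v a b 1) z := by
    intro hadj'
    rcases hchar 1 (by omega) (by omega) _ hadj' with hh | hh
    · rw [show (1:ℕ) - 1 = 0 by omega, hF0] at hh
      exact hzs hh
    · -- z = F2 and z adj s : s in nbrs of F2 = {F1, F3}
      rcases hchar 2 (by omega) (by omega) _ (hh ▸ hzadj).symm with h3 | h3
      · rw [show (2:ℕ) - 1 = 1 by omega] at h3
        have := hinj 0 1 (by omega) (by omega) (hF0.trans h3)
        omega
      · have := hinj 0 3 (by omega) (by omega) (hF0.trans h3)
        omega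
  have hnadjnz : ¬ G.Adj (Fsp G v a b (kA + kB + 1)) z := by
    intro hadj'
    rcases hchar (kA + kB + 1) (by omega) (by omega) _ hadj' with hh | hh
    · -- z = F(n-2)
      rcases hchar (kA + kB + 1 - 1) (by omega) (by omega) _ (hh ▸ hzadj).symm
        with h3 | h3
      · have := hinj 0 (kA + kB + 1 - 1 - 1) ?_ (by omega) (hF0.trans h3)
        · omega
        · omega
      · rw [show kA + kB + 1 - 1 + 1 = kA + kB + 1 by omega] at h3
        have := hinj 0 (kA + kB + 1) (by omega) (by omega) (hF0.trans h3)
        omega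
    · rw [show kA + kB + 1 + 1 = kA + kB + 2 by omega, hFn] at hh
      exact hzs hh
  exact hclaw ⟨wE G v a, Fsp G v a b 1, Fsp G v a b (kA + kB + 1), z,
    hne1, fun hh => hz1 hh.symm, fun hh => hzn hh.symm,
    hadj1, hadjn, hzadj, hnadj1n, hnadj1z, hnadjnz⟩

end Splice

instance : Fact (Nat.Prime 3) := ⟨by norm_num⟩

lemma cast3_ne {n : ℕ} (h : n % 3 ≠ 0) : (n : ZMod 3) ≠ 0 := by
  intro hc
  obtain ⟨k, rfl⟩ := (ZMod.natCast_eq_zero_iff n 3).mp hc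
  omega

section Coloring

variable (hone : ∃ v : V, d G v = 1)

open Classical in
/-- a canonical neighbor -/
noncomputable def nb1 (v : V) : V := if h : ∃ w, G.Adj v w then h.choose else v

/-- the other canonical neighbor -/
noncomputable def nb2 (v : V) : V := oth G v (nb1 G v)

lemma nb1_adj {v : V} (h : ∃ w, G.Adj v w) : G.Adj v (nb1 G v) := by
  rw [nb1, dif_pos h]
  exact h.choose_spec

lemma nb2_spec {v : V} (h2 : d G v = 2) :
    G.Adj v (nb2 G v) ∧ nb2 G v ≠ nb1 G v := by
  have h : ∃ w, G.Adj v w := by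
    obtain ⟨x, y, _, hset⟩ := Set.ncard_eq_two.mp h2
    exact ⟨x, by rw [← SimpleGraph.mem_neighborSet, hset]; simp⟩
  have := nbr_two G h2 (nb1_adj G h)
  exact ⟨(this.1 : _), this.2.1⟩

open Classical in
/-- the coloring formula for degree-2 vertices, relative to an ordered
pair of its neighbors -/
noncomputable def FF (v a b : V) : ZMod 3 :=
  if wE G v a = wE G v b then
    col G hone (wE G v a) +
      (if idx v < idx (if wK G v a = 1 then a else b) then 1 else 2)
  else if d G (wE G v a) = 3 ∧ d G (wE G v b) = 3 then
    col G hone (wE G v a) + (wK G v a + 1 : ℕ) *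
      ((col G hone (wE G v b) - col G hone (wE G v a)) *
        ((wK G v a + wK G v b + 2 : ℕ) : ZMod 3)⁻¹)
  else if d G (wE G v a) = 3 then
    col G hone (wE G v a) + ((wK G v a + 1 : ℕ) : ZMod 3)
  else col G hone (wE G v b) + ((wK G v b + 1 : ℕ) : ZMod 3)

open Classical in
/-- the full coloring -/
noncomputable def CC : V → ZMod 3 := fun v =>
  if d G v = 3 then col G hone v
  else if d G v = 2 then FF G hone v (nb1 G v) (nb2 G v)
  else if h : ∃ w, G.Adj v w then
    col G hone (wE G v (nb1 G v)) + ((wK G v (nb1 G v) + 1 : ℕ) : ZMod 3)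
  else 0

lemma CC_deg3 {v : V} (h3 : d G v = 3) : CC G hone v = col G hone v := by
  rw [CC, if_pos h3]

open Classical in
lemma CC_deg1 {v : V} (h1 : d G v = 1) {p : V} (hp : G.Adj v p) :
    CC G hone v = col G hone (wE G v p) + ((wK G v p + 1 : ℕ) : ZMod 3) := by
  have hx : ∃ w, G.Adj v w := ⟨p, hp⟩
  have hnb : nb1 G v = p := nbr_one G h1 hp _ (nb1_adj G hx)
  rw [CC, if_neg (by omega), if_neg (by omega), dif_pos hx, hnb]

/-- the formula does not depend on the order of the two neighbors -/
lemma FF_swap (hconn : G.Connected) (hclaw : ClawFree G)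
    (hmax : ∀ v : V, d G v ≤ 3) (hmax' : ∃ v : V, d G v = 3)
    (hA : ∀ j : ℕ, 0 < j → ¬ HasAPath G (3 * j + 1))
    {v a b : V} (h2 : d G v = 2) (ha : G.Adj v a) (hb : G.Adj v b)
    (hab : a ≠ b) : FF G hone v a b = FF G hone v b a := by
  by_cases hloop : wE G v a = wE G v b
  · rw [FF, if_pos hloop, FF, if_pos hloop.symm, ← hloop]
    have hkk := (Fsp_loop G h2 ha hb hab hconn hmax hmax' hclaw hloop).1
    have hsel : (if wK G v a = 1 then a else b) = (if wK G v b = 1 then b else a) := by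
      rcases (by omega : wK G v a = 1 ∧ wK G v b = 0 ∨ wK G v a = 0 ∧ wK G v b = 1)
        with ⟨hA1, hB0⟩ | ⟨hA0, hB1⟩
      · rw [if_pos hA1, if_neg (by omega)]
      · rw [if_neg (by omega), if_pos hB1]
    rw [hsel]
  · have hloop' : wE G v b ≠ wE G v a := fun hh => hloop hh.symm
    rw [FF, if_neg hloop, FF, if_neg hloop']
    by_cases h3a : d G (wE G v a) = 3 <;> by_cases h3b : d G (wE G v b) = 3
    · -- both ends degree 3
      rw [if_pos ⟨h3a, h3b⟩, if_pos ⟨h3b, h3a⟩]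
      have hnz : ((wK G v a + wK G v b + 2 : ℕ) : ZMod 3) ≠ 0 :=
        cast3_ne (Fsp_nz G h2 ha hb hab hA hconn hmax' h3a h3b hloop)
      have hcomm : wK G v b + wK G v a + 2 = wK G v a + wK G v b + 2 := by omega
      rw [hcomm]
      have hmul := mul_inv_cancel₀ hnz
      push_cast at hmul ⊢
      linear_combination (col G hone (wE G v b) - col G hone (wE G v a)) * hmul
    · rw [if_neg (by tauto), if_pos h3a, if_neg (by tauto), if_neg h3b]
    · rw [if_neg (by tauto), if_neg h3a, if_neg (by tauto), if_pos h3b]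
    · exfalso
      have hda := end_deg G hconn hmax hmax' ha
      have hdb := end_deg G hconn hmax hmax' hb
      exact Fsp_not11 G h2 ha hb hab hconn hmax' ⟨by tauto, by tauto⟩

lemma CC_eval2 (hconn : G.Connected) (hclaw : ClawFree G)
    (hmax : ∀ v : V, d G v ≤ 3) (hmax' : ∃ v : V, d G v = 3)
    (hA : ∀ j : ℕ, 0 < j → ¬ HasAPath G (3 * j + 1))
    {v p : V} (h2 : d G v = 2) (hp : G.Adj v p) :
    CC G hone v = FF G hone v p (oth G v p) := by
  have hx : ∃ w, G.Adj v w := ⟨p, hp⟩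
  have h1 := nb1_adj G hx
  have h2' := nb2_spec G h2
  rw [CC, if_neg (by omega), if_pos h2]
  rcases eq_or_ne p (nb1 G v) with rfl | hne
  · rfl
  · have hpnb2 : p = nb2 G v := by
      rcases (nbr_two G h2 h1).2.2 p hp with hh | hh
      · exact absurd hh hne
      · exact hh
    have hoth : oth G v p = nb1 G v := by
      apply oth_eq G h2 hp h1
      rw [hpnb2]
      exact h2'.2.symm
    rw [hoth, hpnb2]
    exact FF_swap G hone hconn hclaw hmax hmax' hA h2 h1 h2'.1 h2'.2.symm

end Coloring

lemma two_ne_zero' : (2 : ZMod 3) ≠ 0 := by decide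

section Verify

variable (hone : ∃ v : V, d G v = 1) (hconn : G.Connected) (hclaw : ClawFree G)
  (hmax : ∀ v : V, d G v ≤ 3) (hmax' : ∃ v : V, d G v = 3)
  (hA : ∀ j : ℕ, 0 < j → ¬ HasAPath G (3 * j + 1))

include hone hconn hclaw hmax hmax' hA

lemma edge33 {u w : V} (h3u : d G u = 3) (h3w : d G w = 3) (huw : G.Adj u w) :
    CC G hone u ≠ CC G hone w := by
  rw [CC_deg3 G hone h3u, CC_deg3 G hone h3w]
  exact col_ne G hone hconn hmax hmax'
    ⟨huw.ne, h3u, h3w, w, huw, (wK_zero G (by omega)).2⟩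

lemma edge13 {u w : V} (h1u : d G u = 1) (h3w : d G w = 3) (huw : G.Adj u w) :
    CC G hone u ≠ CC G hone w := by
  rw [CC_deg1 G hone h1u huw, CC_deg3 G hone h3w]
  obtain ⟨hK0, hE⟩ := wK_zero G (s := u) (x := w) (by omega : d G w ≠ 2)
  rw [hE, hK0]
  intro h
  have h0 := add_eq_left.mp h
  norm_num at h0

lemma edge11 {u w : V} (h1u : d G u = 1) (h1w : d G w = 1) (huw : G.Adj u w) :
    False := by
  apply closed_contra G hconn hmax' (T := {u, w})
  · rintro y (rfl | rfl) z hz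
    · rw [nbr_one G h1u huw z hz]
      exact Or.inr rfl
    · rw [nbr_one G h1w huw.symm z hz]
      exact Or.inl rfl
  · rintro y (rfl | rfl) <;> omega
  · exact ⟨u, Or.inl rfl⟩

lemma edge23 {t v : V} (h3 : d G t = 3) (h2 : d G v = 2) (hvt : G.Adj v t) :
    CC G hone v ≠ CC G hone t := by
  rw [CC_eval2 G hone hconn hclaw hmax hmax' hA h2 hvt, CC_deg3 G hone h3]
  have hq : G.Adj v (oth G v t) := (nbr_two G h2 hvt).1
  have hqt : oth G v t ≠ t := (nbr_two G h2 hvt).2.1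
  obtain ⟨hKt, hEt⟩ := wK_zero G (s := v) (x := t) (by omega : d G t ≠ 2)
  rw [FF, hEt, hKt]
  by_cases hloop : t = wE G v (oth G v t)
  · rw [if_pos hloop]
    by_cases hidx : idx v < idx (if (0:ℕ) = 1 then t else oth G v t)
    · rw [if_pos hidx]
      intro h
      have h0 := add_eq_left.mp h
      norm_num at h0
    · rw [if_neg hidx]
      intro h
      have h0 := add_eq_left.mp h
      exact two_ne_zero' h0
  · rw [if_neg hloop]
    by_cases h3q : d G (wE G v (oth G v t)) = 3
    · rw [if_pos ⟨h3, h3q⟩]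
      have hMadj : Madj G t (wE G v (oth G v t)) := by
        have hh := Fsp_Madj G h2 hvt hq hqt.symm hconn hmax'
          (by rw [hEt]; exact h3) h3q (by rw [hEt]; exact hloop)
        rwa [hEt] at hh
      have hD : col G hone (wE G v (oth G v t)) - col G hone t ≠ 0 :=
        sub_ne_zero.mpr (col_ne G hone hconn hmax hmax' hMadj).symm
      have hnz : ((wK G v t + wK G v (oth G v t) + 2 : ℕ) : ZMod 3) ≠ 0 :=
        cast3_ne (Fsp_nz G h2 hvt hq hqt.symm hA hconn hmax'
          (by rw [hEt]; exact h3) h3q (by rw [hEt]; exact hloop))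
      rw [hKt] at hnz
      intro h
      have h0 := add_eq_left.mp h
      rcases mul_eq_zero.mp h0 with hc | hc
      · norm_num at hc
      · rcases mul_eq_zero.mp hc with hc2 | hc2
        · exact hD hc2
        · exact inv_ne_zero hnz hc2
    · rw [if_neg (by tauto), if_pos h3]
      intro h
      have h0 := add_eq_left.mp h
      norm_num at h0

lemma edge22 {u w : V} (h2u : d G u = 2) (h2w : d G w = 2) (huw : G.Adj u w) :
    CC G hone u ≠ CC G hone w := by
  have hu' : G.Adj u (oth G u w) := (nbr_two G h2u huw).1
  have hw' : G.Adj w (oth G w u) := (nbr_two G h2w huw.symm).1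
  have hSA := walk_shift_K G (s := u) (x := w) huw hconn hmax' h2w
  have hSB := walk_shift_K G (s := w) (x := u) huw.symm hconn hmax' h2u
  set S := wE G w (oth G w u) with hS
  set S' := wE G u (oth G u w) with hS'
  set κ := wK G w (oth G w u) with hκ
  set κ' := wK G u (oth G u w) with hκ'
  have hEuw : wE G u w = S := hSA.2
  have hKuw : wK G u w = κ + 1 := hSA.1
  have hEwu : wE G w u = S' := hSB.2
  have hKwu : wK G w u = κ' + 1 := hSB.1
  rw [CC_eval2 G hone hconn hclaw hmax hmax' hA h2u huw,
    CC_eval2 G hone hconn hclaw hmax hmax' hA h2w huw.symm]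
  rw [FF, FF, hEuw, hKuw, hEwu, hKwu, ← hκ, ← hκ', ← hS, ← hS']
  by_cases hloop : S = S'
  · -- triangle case
    have hloopu : wE G u w = wE G u (oth G u w) := by rw [hEuw, ← hS']; exact hloop
    have hkk := (Fsp_loop G h2u huw hu' (nbr_two G h2u huw).2.1.symm
      hconn hmax hmax' hclaw hloopu).1
    rw [hKuw] at hkk
    have hκ0 : κ = 0 := by omega
    have hκ'0 : κ' = 0 := by omega
    rw [if_pos hloop, if_pos hloop.symm, hκ0, hκ'0, ← hloop]
    have hidx : idx u ≠ idx w := fun hh => huw.ne (idx_inj (V := V) hh)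
    intro h
    split_ifs at h <;> first | omega | exact absurd (add_left_cancel h) (by decide)
  · rw [if_neg hloop, if_neg (Ne.symm hloop)]
    have hdS : d G S = 1 ∨ d G S = 3 := end_deg G hconn hmax hmax' hw'
    have hdS' : d G S' = 1 ∨ d G S' = 3 := end_deg G hconn hmax hmax' hu'
    have hloopu : wE G u w ≠ wE G u (oth G u w) := by
      rw [hEuw, ← hS']; exact hloop
    rcases hdS with hdS1 | hdS3
    · -- S has degree 1, so S' must have degree 3
      rcases hdS' with hdS'1 | hdS'3
      · exfalso
        apply Fsp_not11 G h2u huw hu' (nbr_two G h2u huw).2.1.symm hconn hmax'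
        rw [hEuw]
        exact ⟨hdS1, hdS'1⟩
      · rw [if_neg (by omega : ¬ (d G S = 3 ∧ d G S' = 3)), if_neg (by omega),
          if_neg (by omega : ¬ (d G S' = 3 ∧ d G S = 3)), if_pos hdS'3]
        intro h
        rw [add_right_inj] at h
        push_cast at h
        first
          | (have h1 : (1 : ZMod 3) = 0 := by linear_combination h
             exact absurd h1 (by decide))
          | (have h1 : (1 : ZMod 3) = 0 := by linear_combination -h
             exact absurd h1 (by decide))
    · rcases hdS' with hdS'1 | hdS'3
      · rw [if_neg (by omega : ¬ (d G S = 3 ∧ d G S' = 3)), if_pos hdS3,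
          if_neg (by omega : ¬ (d G S' = 3 ∧ d G S = 3)), if_neg (by omega)]
        intro h
        rw [add_right_inj] at h
        push_cast at h
        first
          | (have h1 : (1 : ZMod 3) = 0 := by linear_combination h
             exact absurd h1 (by decide))
          | (have h1 : (1 : ZMod 3) = 0 := by linear_combination -h
             exact absurd h1 (by decide))
      · -- both ends degree 3
        rw [if_pos ⟨hdS3, hdS'3⟩, if_pos ⟨hdS'3, hdS3⟩]
        have hMadj : Madj G S S' := by
          have hh := Fsp_Madj G h2u huw hu' (nbr_two G h2u huw).2.1.symm hconn hmax'
            (by rw [hEuw]; exact hdS3) hdS'3 hloopu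
          rwa [hEuw] at hh
        have hD : col G hone S' - col G hone S ≠ 0 :=
          sub_ne_zero.mpr (col_ne G hone hconn hmax hmax' hMadj).symm
        have hnz0 := Fsp_nz G h2u huw hu' (nbr_two G h2u huw).2.1.symm hA hconn hmax'
          (by rw [hEuw]; exact hdS3) hdS'3 hloopu
        rw [hKuw] at hnz0
        have hnz : ((κ + 1 + κ' + 2 : ℕ) : ZMod 3) ≠ 0 := cast3_ne hnz0
        have hn2 : κ' + 1 + κ + 2 = κ + 1 + κ' + 2 := by omega
        rw [hn2]
        have hmul := mul_inv_cancel₀ hnz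
        intro h
        have hDi : (col G hone S' - col G hone S) *
            ((κ + 1 + κ' + 2 : ℕ) : ZMod 3)⁻¹ = 0 := by
          push_cast at h hmul ⊢
          linear_combination h - (col G hone S' - col G hone S) * hmul
        rcases mul_eq_zero.mp hDi with hc | hc
        · exact hD hc
        · exact inv_ne_zero hnz hc

lemma edge12 {u w : V} (h1u : d G u = 1) (h2w : d G w = 2) (huw : G.Adj u w) :
    CC G hone u ≠ CC G hone w := by
  have hw' : G.Adj w (oth G w u) := (nbr_two G h2w huw.symm).1
  have hw'u : oth G w u ≠ u := (nbr_two G h2w huw.symm).2.1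
  have hSA := walk_shift_K G (s := u) (x := w) huw hconn hmax' h2w
  set S := wE G w (oth G w u) with hS
  set κ := wK G w (oth G w u) with hκ
  obtain ⟨hKwu, hEwu⟩ := wK_zero G (s := w) (x := u) (by omega : d G u ≠ 2)
  have hSne : S ≠ u := by
    intro hh
    rcases Nat.eq_zero_or_pos κ with hk0 | hkpos
    · have hSo : S = oth G w u := by rw [hS, wE, ← hκ, hk0]; rfl
      rw [hSo] at hh
      exact hw'u hh
    · have hadjE : G.Adj S (gseq G w (oth G w u) κ) := by
        rw [hS]
        exact (walk_adj' G hw' κ (le_refl _)).symm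
      rw [hh] at hadjE
      have hwq := nbr_one G h1u huw _ hadjE
      have : gseq G w (oth G w u) 0 = gseq G w (oth G w u) κ := by
        rw [hwq]
        rfl
      exact walk_inj2 G hconn hmax' hw' h2w 0 κ hkpos (by omega) this
  rw [CC_deg1 G hone h1u huw,
    CC_eval2 G hone hconn hclaw hmax hmax' hA h2w huw.symm]
  rw [hSA.2, hSA.1, FF, hEwu, hKwu]
  rw [if_neg (Ne.symm hSne), if_neg (by omega : ¬ (d G u = 3 ∧ d G S = 3)),
    if_neg (by omega : ¬ d G u = 3)]
  intro h
  rw [add_right_inj] at h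
  push_cast at h
  have h1 : (1 : ZMod 3) = 0 := by linear_combination h
  exact absurd h1 (by decide)

lemma dyn33 {v p q : V} (h2 : d G v = 2) (h3p : d G p = 3) (h3q : d G q = 3)
    (hp : G.Adj v p) (hq : G.Adj v q) (hpq : p ≠ q) :
    CC G hone p ≠ CC G hone q := by
  obtain ⟨hKvp, hEvp⟩ := wK_zero G (s := v) (x := p) (by omega : d G p ≠ 2)
  obtain ⟨hKvq, hEvq⟩ := wK_zero G (s := v) (x := q) (by omega : d G q ≠ 2)
  rw [CC_deg3 G hone h3p, CC_deg3 G hone h3q]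
  have hM := Fsp_Madj G h2 hp hq hpq hconn hmax'
    (by rw [hEvp]; exact h3p) (by rw [hEvq]; exact h3q)
    (by rw [hEvp, hEvq]; exact hpq)
  rw [hEvp, hEvq] at hM
  exact col_ne G hone hconn hmax hmax' hM

lemma dyn31 {v p q : V} (h2 : d G v = 2) (h3p : d G p = 3) (h1q : d G q = 1)
    (hp : G.Adj v p) (hq : G.Adj v q) (hpq : p ≠ q) :
    CC G hone p ≠ CC G hone q := by
  have hothq : oth G v q = p := oth_eq G h2 hq hp hpq
  have hsh := walk_shift_K G (s := q) (x := v) hq.symm hconn hmax' h2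
  rw [hothq] at hsh
  obtain ⟨hKvp, hEvp⟩ := wK_zero G (s := v) (x := p) (by omega : d G p ≠ 2)
  rw [CC_deg3 G hone h3p, CC_deg1 G hone h1q hq.symm, hsh.1, hsh.2, hEvp, hKvp]
  intro h
  have h0 := left_eq_add.mp h
  exact absurd h0 (by decide)

lemma dyn11 {v p q : V} (h2 : d G v = 2) (h1p : d G p = 1) (h1q : d G q = 1)
    (hp : G.Adj v p) (hq : G.Adj v q) (hpq : p ≠ q) : False := by
  obtain ⟨hKvp, hEvp⟩ := wK_zero G (s := v) (x := p) (by omega : d G p ≠ 2)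
  obtain ⟨hKvq, hEvq⟩ := wK_zero G (s := v) (x := q) (by omega : d G q ≠ 2)
  exact Fsp_not11 G h2 hp hq hpq hconn hmax'
    ⟨by rw [hEvp]; exact h1p, by rw [hEvq]; exact h1q⟩

lemma dyn32 {v p q : V} (h2 : d G v = 2) (h3p : d G p = 3) (h2q : d G q = 2)
    (hp : G.Adj v p) (hq : G.Adj v q) (hpq : p ≠ q) :
    CC G hone p ≠ CC G hone q := by
  have hothq : oth G v q = p := oth_eq G h2 hq hp hpq
  obtain ⟨hKvp, hEvp⟩ := wK_zero G (s := v) (x := p) (by omega : d G p ≠ 2)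
  have hshA := walk_shift_K G (s := q) (x := v) hq.symm hconn hmax' h2
  rw [hothq] at hshA
  have hshB := walk_shift_K G (s := v) (x := q) hq hconn hmax' h2q
  have hEqv : wE G q v = p := by rw [hshA.2, hEvp]
  have hKqv : wK G q v = 1 := by rw [hshA.1, hKvp]
  rw [CC_deg3 G hone h3p,
    CC_eval2 G hone hconn hclaw hmax hmax' hA h2q hq.symm]
  rw [FF, hEqv, hKqv]
  by_cases hloop : p = wE G q (oth G q v)
  · rw [if_pos hloop]
    intro h
    have h0 := left_eq_add.mp h
    split_ifs at h0 <;> exact absurd h0 (by decide)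
  · rw [if_neg hloop]
    have hnloopv : wE G v p ≠ wE G v q := by
      rw [hEvp, hshB.2]
      exact hloop
    by_cases h3S : d G (wE G q (oth G q v)) = 3
    · rw [if_pos ⟨h3p, h3S⟩]
      have hM : Madj G p (wE G q (oth G q v)) := by
        have hh := Fsp_Madj G h2 hp hq hpq hconn hmax'
          (by rw [hEvp]; exact h3p) (by rw [hshB.2]; exact h3S) hnloopv
        rwa [hEvp, hshB.2] at hh
      have hD : col G hone (wE G q (oth G q v)) - col G hone p ≠ 0 :=
        sub_ne_zero.mpr (col_ne G hone hconn hmax hmax' hM).symm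
      have hnz0 := Fsp_nz G h2 hp hq hpq hA hconn hmax'
        (by rw [hEvp]; exact h3p) (by rw [hshB.2]; exact h3S) hnloopv
      have harg : 1 + wK G q (oth G q v) + 2
          = wK G v p + wK G v q + 2 := by
        have := hshB.1
        omega
      rw [harg]
      have hnz : ((wK G v p + wK G v q + 2 : ℕ) : ZMod 3) ≠ 0 := cast3_ne hnz0
      intro h
      have h0 := left_eq_add.mp h
      rcases mul_eq_zero.mp h0 with hc | hc
      · exact absurd hc (by decide)
      · rcases mul_eq_zero.mp hc with hc2 | hc2
        · exact hD hc2
        · exact inv_ne_zero hnz hc2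
    · rw [if_neg (by tauto), if_pos h3p]
      intro h
      have h0 := left_eq_add.mp h
      exact absurd h0 (by decide)

lemma dyn21 {v p q : V} (h2 : d G v = 2) (h2p : d G p = 2) (h1q : d G q = 1)
    (hp : G.Adj v p) (hq : G.Adj v q) (hpq : p ≠ q) :
    CC G hone p ≠ CC G hone q := by
  have hothq : oth G v q = p := oth_eq G h2 hq hp hpq
  have hothp : oth G v p = q := oth_eq G h2 hp hq hpq.symm
  obtain ⟨hKvq, hEvq⟩ := wK_zero G (s := v) (x := q) (by omega : d G q ≠ 2)
  have hκ1 : 1 ≤ wK G v p := wK_pos G hconn hmax' hp h2p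
  have hdS1 : d G (wE G v p) = 3 := by
    rcases end_deg G hconn hmax hmax' hp with h1 | h3
    · exfalso
      exact Fsp_not11 G h2 hp hq hpq hconn hmax' ⟨h1, by rw [hEvq]; exact h1q⟩
    · exact h3
  -- CC q
  have hshq := walk_shift_K G (s := q) (x := v) hq.symm hconn hmax' h2
  rw [hothq] at hshq
  rw [CC_deg1 G hone h1q hq.symm, hshq.1, hshq.2]
  -- CC p
  have hshp1 := walk_shift_K G (s := p) (x := v) hp.symm hconn hmax' h2
  rw [hothp] at hshp1
  have hshp2 := walk_shift_K G (s := v) (x := p) hp hconn hmax' h2p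
  have hEpv : wE G p v = q := by rw [hshp1.2, hEvq]
  rw [CC_eval2 G hone hconn hclaw hmax hmax' hA h2p hp.symm]
  rw [FF, hEpv]
  rw [if_neg (show q ≠ wE G p (oth G p v) by
      rw [← hshp2.2]
      intro hh
      rw [← hh] at hdS1
      omega),
    if_neg (by omega : ¬ (d G q = 3 ∧ d G (wE G p (oth G p v)) = 3)),
    if_neg (by omega : ¬ d G q = 3)]
  rw [← hshp2.2]
  intro h
  rw [add_right_inj] at h
  have harg : wK G p (oth G p v) + 1 = wK G v p := by
    have := hshp2.1
    omega
  rw [harg] at h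
  have hone' : wK G v p + 1 = wK G p (oth G p v) + 2 := by omega
  push_cast at h
  have h1 : (2 : ZMod 3) = 0 := by linear_combination -h
  exact absurd h1 (by decide)

lemma dyn22 {v p q : V} (h2 : d G v = 2) (h2p : d G p = 2) (h2q : d G q = 2)
    (hp : G.Adj v p) (hq : G.Adj v q) (hpq : p ≠ q) :
    CC G hone p ≠ CC G hone q := by
  have hothq : oth G v q = p := oth_eq G h2 hq hp hpq
  have hothp : oth G v p = q := oth_eq G h2 hp hq hpq.symm
  have hκ1 : 1 ≤ wK G v p := wK_pos G hconn hmax' hp h2p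
  have hκ2 : 1 ≤ wK G v q := wK_pos G hconn hmax' hq h2q
  have hsh1 := walk_shift_K G (s := p) (x := v) hp.symm hconn hmax' h2
  rw [hothp] at hsh1
  have hsh2 := walk_shift_K G (s := v) (x := p) hp hconn hmax' h2p
  have hsh3 := walk_shift_K G (s := q) (x := v) hq.symm hconn hmax' h2
  rw [hothq] at hsh3
  have hsh4 := walk_shift_K G (s := v) (x := q) hq hconn hmax' h2q
  have hS1S2 : wE G v p ≠ wE G v q := by
    intro hh
    have hkk := (Fsp_loop G h2 hp hq hpq hconn hmax hmax' hclaw hh).1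
    omega
  have hp' : G.Adj p (oth G p v) := (nbr_two G h2p hp.symm).1
  have hq' : G.Adj q (oth G q v) := (nbr_two G h2q hq.symm).1
  have hpv' : v ≠ oth G p v := fun hh => ((nbr_two G h2p hp.symm).2.1 hh.symm)
  have hqv' : v ≠ oth G q v := fun hh => ((nbr_two G h2q hq.symm).2.1 hh.symm)
  rw [CC_eval2 G hone hconn hclaw hmax hmax' hA h2p hp.symm,
    CC_eval2 G hone hconn hclaw hmax hmax' hA h2q hq.symm]
  have e1 : wK G p (oth G p v) + 1 = wK G v p := by omega
  have e3 : wK G q v + 1 = wK G v p + 2 := by omega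
  have e5 : wK G q (oth G q v) + 1 = wK G v q := by omega
  have e6 : wK G p v + 1 = wK G v q + 2 := by omega
  rcases end_deg G hconn hmax hmax' hp with hd1 | hd3
  · rcases end_deg G hconn hmax hmax' hq with he1 | he3
    · exact absurd ⟨hd1, he1⟩ (Fsp_not11 G h2 hp hq hpq hconn hmax')
    · -- d S1 = 1, d S2 = 3 : base S2
      rw [FF_swap G hone hconn hclaw hmax hmax' hA h2q hq.symm hq' hqv']
      rw [FF, FF, ← hsh2.2, ← hsh4.2, hsh1.2, hsh3.2]
      rw [if_neg (Ne.symm hS1S2), if_neg (Ne.symm hS1S2),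
        if_neg (by omega : ¬ (d G (wE G v q) = 3 ∧ d G (wE G v p) = 3)),
        if_neg (by omega : ¬ (d G (wE G v q) = 3 ∧ d G (wE G v p) = 3)),
        if_pos he3, if_pos he3, e5, e6]
      intro h
      rw [add_right_inj] at h
      push_cast at h
      have h1 : (2 : ZMod 3) = 0 := by linear_combination h
      exact absurd h1 (by decide)
  · rcases end_deg G hconn hmax hmax' hq with he1 | he3
    · -- d S1 = 3, d S2 = 1
      rw [FF_swap G hone hconn hclaw hmax hmax' hA h2p hp.symm hp' hpv']
      rw [FF, FF, ← hsh2.2, ← hsh4.2, hsh1.2, hsh3.2]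
      rw [if_neg hS1S2, if_neg hS1S2,
        if_neg (by omega : ¬ (d G (wE G v p) = 3 ∧ d G (wE G v q) = 3)),
        if_neg (by omega : ¬ (d G (wE G v p) = 3 ∧ d G (wE G v q) = 3)),
        if_pos hd3, if_pos hd3, e1, e3]
      intro h
      rw [add_right_inj] at h
      push_cast at h
      have h1 : (2 : ZMod 3) = 0 := by linear_combination -h
      exact absurd h1 (by decide)
    · -- both degree 3
      rw [FF_swap G hone hconn hclaw hmax hmax' hA h2p hp.symm hp' hpv']
      rw [FF, FF, ← hsh2.2, ← hsh4.2, hsh1.2, hsh3.2]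
      have e2 : wK G p (oth G p v) + wK G p v + 2 = wK G v p + wK G v q + 2 := by
        omega
      have e4 : wK G q v + wK G q (oth G q v) + 2
          = wK G v p + wK G v q + 2 := by omega
      rw [if_neg hS1S2, if_neg hS1S2,
        if_pos ⟨hd3, he3⟩, if_pos ⟨hd3, he3⟩, e1, e3, e2, e4]
      have hM : Madj G (wE G v p) (wE G v q) :=
        Fsp_Madj G h2 hp hq hpq hconn hmax' hd3 he3 hS1S2
      have hD : col G hone (wE G v q) - col G hone (wE G v p) ≠ 0 :=
        sub_ne_zero.mpr (col_ne G hone hconn hmax hmax' hM).symm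
      have hnz : ((wK G v p + wK G v q + 2 : ℕ) : ZMod 3) ≠ 0 :=
        cast3_ne (Fsp_nz G h2 hp hq hpq hA hconn hmax' hd3 he3 hS1S2)
      intro h
      rw [add_right_inj] at h
      have hX : (2 : ZMod 3) * ((col G hone (wE G v q) - col G hone (wE G v p)) *
          ((wK G v p + wK G v q + 2 : ℕ) : ZMod 3)⁻¹) = 0 := by
        push_cast at h ⊢
        linear_combination -h
      rcases mul_eq_zero.mp hX with hc | hc
      · exact absurd hc (by decide)
      · rcases mul_eq_zero.mp hc with hc2 | hc2
        · exact hD hc2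
        · exact inv_ne_zero hnz hc2

lemma prop_edge {u w : V} (huw : G.Adj u w) : CC G hone u ≠ CC G hone w := by
  have hdu1 : 1 ≤ d G u := d_pos G huw
  have hdw1 : 1 ≤ d G w := d_pos G huw.symm
  have hdu3 := hmax u
  have hdw3 := hmax w
  rcases (by omega : d G u = 1 ∨ d G u = 2 ∨ d G u = 3) with h1u | h2u | h3u <;>
    rcases (by omega : d G w = 1 ∨ d G w = 2 ∨ d G w = 3) with h1w | h2w | h3w
  · exact (edge11 G hone hconn hclaw hmax hmax' hA h1u h1w huw).elim
  · exact edge12 G hone hconn hclaw hmax hmax' hA h1u h2w huw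
  · exact edge13 G hone hconn hclaw hmax hmax' hA h1u h3w huw
  · exact (edge12 G hone hconn hclaw hmax hmax' hA h1w h2u huw.symm).symm
  · exact edge22 G hone hconn hclaw hmax hmax' hA h2u h2w huw
  · exact edge23 G hone hconn hclaw hmax hmax' hA h3w h2u huw
  · exact (edge13 G hone hconn hclaw hmax hmax' hA h1w h3u huw.symm).symm
  · exact (edge23 G hone hconn hclaw hmax hmax' hA h3u h2w huw.symm).symm
  · exact edge33 G hone hconn hclaw hmax hmax' hA h3u h3w huw

lemma dyn_two {v : V} (h2 : d G v = 2) :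
    ∃ p q : V, G.Adj v p ∧ G.Adj v q ∧ CC G hone p ≠ CC G hone q := by
  have hx : ∃ w, G.Adj v w := by
    obtain ⟨x, y, _, hset⟩ := Set.ncard_eq_two.mp h2
    exact ⟨x, by rw [← SimpleGraph.mem_neighborSet, hset]; simp⟩
  have hp : G.Adj v (nb1 G v) := nb1_adj G hx
  have hq : G.Adj v (nb2 G v) := (nb2_spec G h2).1
  have hpq : nb1 G v ≠ nb2 G v := (nb2_spec G h2).2.symm
  refine ⟨nb1 G v, nb2 G v, hp, hq, ?_⟩
  have hdp1 : 1 ≤ d G (nb1 G v) := d_pos G hp.symm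
  have hdq1 : 1 ≤ d G (nb2 G v) := d_pos G hq.symm
  have hdp3 := hmax (nb1 G v)
  have hdq3 := hmax (nb2 G v)
  rcases (by omega : d G (nb1 G v) = 1 ∨ d G (nb1 G v) = 2 ∨ d G (nb1 G v) = 3)
    with h1p | h2p | h3p <;>
    rcases (by omega : d G (nb2 G v) = 1 ∨ d G (nb2 G v) = 2 ∨ d G (nb2 G v) = 3)
      with h1q | h2q | h3q
  · exact (dyn11 G hone hconn hclaw hmax hmax' hA h2 h1p h1q hp hq hpq).elim
  · exact (dyn21 G hone hconn hclaw hmax hmax' hA h2 h2q h1p hq hp hpq.symm).symm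
  · exact (dyn31 G hone hconn hclaw hmax hmax' hA h2 h3q h1p hq hp hpq.symm).symm
  · exact dyn21 G hone hconn hclaw hmax hmax' hA h2 h2p h1q hp hq hpq
  · exact dyn22 G hone hconn hclaw hmax hmax' hA h2 h2p h2q hp hq hpq
  · exact (dyn32 G hone hconn hclaw hmax hmax' hA h2 h3q h2p hq hp hpq.symm).symm
  · exact dyn31 G hone hconn hclaw hmax hmax' hA h2 h3p h1q hp hq hpq
  · exact dyn32 G hone hconn hclaw hmax hmax' hA h2 h3p h2q hp hq hpq
  · exact dyn33 G hone hconn hclaw hmax hmax' hA h2 h3p h3q hp hq hpq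

lemma dyn_three {v : V} (h3 : d G v = 3) :
    ∃ p q : V, G.Adj v p ∧ G.Adj v q ∧ CC G hone p ≠ CC G hone q := by
  obtain ⟨x, y, z, hxy, hxz, hyz, hset⟩ := Set.ncard_eq_three.mp h3
  have hax : G.Adj v x := by rw [← SimpleGraph.mem_neighborSet, hset]; simp
  have hay : G.Adj v y := by rw [← SimpleGraph.mem_neighborSet, hset]; simp
  have haz : G.Adj v z := by rw [← SimpleGraph.mem_neighborSet, hset]; simp
  by_cases hxy' : G.Adj x y
  · exact ⟨x, y, hax, hay, prop_edge G hone hconn hclaw hmax hmax' hA hxy'⟩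
  by_cases hxz' : G.Adj x z
  · exact ⟨x, z, hax, haz, prop_edge G hone hconn hclaw hmax hmax' hA hxz'⟩
  by_cases hyz' : G.Adj y z
  · exact ⟨y, z, hay, haz, prop_edge G hone hconn hclaw hmax hmax' hA hyz'⟩
  exact absurd ⟨v, x, y, z, hxy, hxz, hyz, hax, hay, haz, hxy', hxz', hyz'⟩ hclaw

end Verify

end DynAux

/-- A connected claw-free graph with `Δ(G) = 3` containing no `A_{3j+1}` (`j ≥ 1`)
that has a vertex of degree 1 has a dynamic 3-coloring. -/
theorem dynamic_three_colorable_of_degree_one {V : Type*} [Fintype V]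
    (G : SimpleGraph V) (hconn : G.Connected) (hclaw : ClawFree G)
    (hmax : ∀ v : V, (G.neighborSet v).ncard ≤ 3)
    (hmax' : ∃ v : V, (G.neighborSet v).ncard = 3)
    (hA : ∀ j : ℕ, 0 < j → ¬ HasAPath G (3 * j + 1))
    (hone : ∃ v : V, (G.neighborSet v).ncard = 1) :
    ∃ c : V → Fin 3, IsDynamicColoring G 3 c := by
  classical
  have hone' : ∃ v, DynAux.d G v = 1 := hone
  have hmax2 : ∀ v, DynAux.d G v ≤ 3 := hmax
  have hmax3 : ∃ v, DynAux.d G v = 3 := hmax'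
  refine ⟨fun v => DynAux.CC G hone' v, ?_, ?_⟩
  · intro u w huw
    exact DynAux.prop_edge G hone' hconn hclaw hmax2 hmax3 hA huw
  · intro v hv
    have hdv : 2 ≤ DynAux.d G v := hv
    have hle := hmax2 v
    rcases (by omega : DynAux.d G v = 2 ∨ DynAux.d G v = 3) with h2 | h3
    · exact DynAux.dyn_two G hone' hconn hclaw hmax2 hmax3 hA h2
    · exact DynAux.dyn_three G hone' hconn hclaw hmax2 hmax3 hA h3
end

section
/- Let G be a connected claw-free graph with maximum degree Δ(G) = 3, and let v_0, v_1, …, v_k (k ≥ 1) be a pendant path of G, i.e., v_0 has degree 1, each v_i with 1 ≤ i ≤ k−1 has degree 2, and v_k has degree 3 in G. Then G has a dynamic 3-coloring if and only if the subgraph of G induced by V(G) \ {v_0, v_1, …, v_{k−1}} has a dynamic 3-coloring. -/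
open SimpleGraph
open Fin.NatCast

/-- Let `G` be a connected claw-free graph with `Δ(G) = 3` and let
`v_0, v_1, …, v_k` be a pendant path  (`deg v_0 = 1`, internal vertices of degree 2,
`deg v_k = 3`). Then `G` has a dynamic 3-coloring iff the subgraph induced by
`V(G) \ {v_0, …, v_{k-1}}` has a dynamic 3-coloring. -/
theorem dynamic_three_colorable_iff_delete_pendant_path {V : Type*} [Fintype V]
    (G : SimpleGraph V) (hconn : G.Connected) (hclaw : ClawFree G)
    (hmax : ∀ u : V, (G.neighborSet u).ncard ≤ 3)
    (hmax' : ∃ u : V, (G.neighborSet u).ncard = 3)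
    (k : ℕ) (hk : 1 ≤ k) (v : ℕ → V)
    (hinj : ∀ i j : ℕ, i ≤ k → j ≤ k → v i = v j → i = j)
    (hadj : ∀ i : ℕ, i < k → G.Adj (v i) (v (i + 1)))
    (h0 : (G.neighborSet (v 0)).ncard = 1)
    (hmid : ∀ i : ℕ, 0 < i → i < k → (G.neighborSet (v i)).ncard = 2)
    (hend : (G.neighborSet (v k)).ncard = 3) :
    (∃ c : V → Fin 3, IsDynamicColoring G 3 c) ↔
      (∃ c : {u : V | ∀ i : ℕ, i < k → u ≠ v i} → Fin 3,
        IsDynamicColoring (G.induce {u : V | ∀ i : ℕ, i < k → u ≠ v i}) 3 c) := by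
  classical
  set S : Set V := {u : V | ∀ i : ℕ, i < k → u ≠ v i} with hSdef
  have hvkS : v k ∈ S := by
    intro i hi h
    have := hinj k i le_rfl hi.le h
    omega
  -- every neighbor of an internal/start path vertex is the previous or next vertex
  have lemA : ∀ i, i < k → ∀ w, G.Adj (v i) w → (0 < i ∧ w = v (i - 1)) ∨ w = v (i + 1) := by
    intro i hi w hw
    rcases Nat.eq_zero_or_pos i with rfl | hpos
    · obtain ⟨a, ha⟩ := Set.ncard_eq_one.mp h0
      have h1 : v 1 ∈ G.neighborSet (v 0) := (G.mem_neighborSet _ _).mpr (hadj 0 hk)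
      have hw' : w ∈ G.neighborSet (v 0) := (G.mem_neighborSet _ _).mpr hw
      rw [ha, Set.mem_singleton_iff] at h1 hw'
      exact Or.inr (hw'.trans h1.symm)
    · obtain ⟨a, b, hab, hset⟩ := Set.ncard_eq_two.mp (hmid i hpos hi)
      have hm : v (i - 1) ∈ G.neighborSet (v i) := by
        have h1 := hadj (i - 1) (by omega)
        rw [show i - 1 + 1 = i from by omega] at h1
        exact (G.mem_neighborSet _ _).mpr h1.symm
      have hp : v (i + 1) ∈ G.neighborSet (v i) := (G.mem_neighborSet _ _).mpr (hadj i hi)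
      have hw' : w ∈ G.neighborSet (v i) := (G.mem_neighborSet _ _).mpr hw
      have hne : v (i - 1) ≠ v (i + 1) := by
        intro h
        have := hinj (i - 1) (i + 1) (by omega) (by omega) h
        omega
      rw [hset, Set.mem_insert_iff, Set.mem_singleton_iff] at hm hp hw'
      rcases hm with hm | hm <;> rcases hp with hp | hp <;> rcases hw' with hw' | hw' <;>
        first
          | exact absurd (hm.trans hp.symm) hne
          | exact Or.inl ⟨hpos, by rw [hw', ← hm]⟩
          | exact Or.inr (by rw [hw', ← hp])
  -- a neighbor of a path vertex `v i` (i < k) which is outside the path must be `v k`,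
  -- and then `i + 1 = k`
  have lemB : ∀ i, i < k → ∀ w, G.Adj (v i) w → (∀ j, j < k → w ≠ v j) →
      w = v k ∧ i + 1 = k := by
    intro i hi w hw hwS
    rcases lemA i hi w hw with ⟨hpos, rfl⟩ | rfl
    · exact absurd rfl (hwS (i - 1) (by omega))
    · have h1 : ¬ (i + 1 < k) := fun h => hwS (i + 1) h rfl
      have h2 : i + 1 = k := by omega
      exact ⟨by rw [h2], h2⟩
  -- vertices of `S` other than `v k` have all their neighbors inside `S`
  have claimNbrsS : ∀ u, u ∈ S → u ≠ v k → ∀ w, G.Adj u w → w ∈ S := by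
    intro u hu hne w hw j hj hwj
    subst hwj
    exact hne (lemB j hj u hw.symm hu).1
  -- neighbors of `v k` other than `v (k-1)` lie in `S`
  have hSnbr : ∀ x, G.Adj (v k) x → x ≠ v (k - 1) → x ∈ S := by
    intro x hx hne j hj hxj
    subst hxj
    obtain ⟨-, h2⟩ := lemB j hj (v k) hx.symm (fun j' hj' h => by
      have := hinj k j' le_rfl hj'.le h; omega)
    exact hne (by rw [show j = k - 1 from by omega])
  have hadjk1 : G.Adj (v k) (v (k - 1)) := by
    have h1 := hadj (k - 1) (by omega)
    rw [show k - 1 + 1 = k from by omega] at h1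
    exact h1.symm
  -- the two neighbors of `v k` other than `v (k-1)`
  obtain ⟨x, y, hxy, hxS, hyS, hadjx, hadjy, hxk1, hyk1⟩ :
      ∃ x y, x ≠ y ∧ x ∈ S ∧ y ∈ S ∧ G.Adj (v k) x ∧ G.Adj (v k) y ∧
        x ≠ v (k - 1) ∧ y ≠ v (k - 1) := by
    obtain ⟨a, b, e, hab, hae, hbe, hset⟩ := Set.ncard_eq_three.mp hend
    have hmem : v (k - 1) ∈ G.neighborSet (v k) := (G.mem_neighborSet _ _).mpr hadjk1
    have ha : a ∈ G.neighborSet (v k) := by rw [hset]; simp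
    have hb : b ∈ G.neighborSet (v k) := by rw [hset]; simp
    have he : e ∈ G.neighborSet (v k) := by rw [hset]; simp
    rw [hset, Set.mem_insert_iff, Set.mem_insert_iff, Set.mem_singleton_iff] at hmem
    rcases hmem with h | h | h
    · refine ⟨b, e, hbe, hSnbr b hb (h ▸ hab.symm), hSnbr e he (h ▸ hae.symm),
        hb, he, h ▸ hab.symm, h ▸ hae.symm⟩
    · refine ⟨a, e, hae, hSnbr a ha (h ▸ hab), hSnbr e he (h ▸ hbe.symm),
        ha, he, h ▸ hab, h ▸ hbe.symm⟩
    · refine ⟨a, b, hab, hSnbr a ha (h ▸ hae), hSnbr b hb (h ▸ hbe),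
        ha, hb, h ▸ hae, h ▸ hbe⟩
  have hxvk : x ≠ v k := fun h => G.irrefl (h ▸ hadjx)
  have hyvk : y ≠ v k := fun h => G.irrefl (h ▸ hadjy)
  -- claw-freeness forces the two other neighbors of `v k` to be adjacent
  have hadjxy : G.Adj x y := by
    by_contra hn
    apply hclaw
    refine ⟨v k, x, y, v (k - 1), hxy, hxk1, hyk1, hadjx, hadjy, hadjk1, hn, ?_, ?_⟩
    · intro h
      exact hxvk (lemB (k - 1) (by omega) x h.symm hxS).1
    · intro h
      exact hyvk (lemB (k - 1) (by omega) y h.symm hyS).1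
  -- degree preservation for vertices of `S` other than `v k`
  have hNeq : ∀ u (hu : u ∈ S), u ≠ v k →
      ((G.induce S).neighborSet ⟨u, hu⟩).ncard = (G.neighborSet u).ncard := by
    intro u hu hne
    have himg : Subtype.val '' ((G.induce S).neighborSet ⟨u, hu⟩) = G.neighborSet u := by
      ext w
      constructor
      · rintro ⟨⟨w', hw'⟩, hmem, rfl⟩
        exact hmem
      · intro hw
        exact ⟨⟨w, claimNbrsS u hu hne w hw⟩, hw, rfl⟩
    rw [← himg, Set.ncard_image_of_injective _ Subtype.val_injective]
  constructor
  · rintro ⟨c, hproper, hdyn⟩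
    refine ⟨fun u => c ↑u, fun u w h => hproper h, ?_⟩
    intro u hu2
    by_cases hvk : (u : V) = v k
    · refine ⟨⟨x, hxS⟩, ⟨y, hyS⟩, ?_, ?_, hproper hadjxy⟩
      · show G.Adj ↑u x; rw [hvk]; exact hadjx
      · show G.Adj ↑u y; rw [hvk]; exact hadjy
    · have h2 : 2 ≤ (G.neighborSet ↑u).ncard := by
        rw [← hNeq ↑u u.2 hvk]
        exact hu2
      obtain ⟨a, b, ha, hb, hab⟩ := hdyn ↑u h2
      exact ⟨⟨a, claimNbrsS ↑u u.2 hvk a ha⟩, ⟨b, claimNbrsS ↑u u.2 hvk b hb⟩, ha, hb, hab⟩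
  · rintro ⟨c, hproper, hdyn⟩
    set a0 : Fin 3 := c ⟨v k, hvkS⟩ with ha0
    set f : ℕ → Fin 3 := fun i => a0 + ((k - i : ℕ) : Fin 3) with hfdef
    have hfk : f k = a0 := by simp [hfdef]
    have hf1 : ∀ i, i + 1 ≤ k → f i ≠ f (i + 1) := by
      intro i hik h
      have h' : ((k - i : ℕ) : Fin 3) = ((k - (i + 1) : ℕ) : Fin 3) := add_left_cancel h
      rw [show k - i = (k - (i + 1)) + 1 from by omega, Nat.cast_add, Nat.cast_one] at h'
      have : (1 : Fin 3) = 0 := by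
        have := h'.symm
        rwa [left_eq_add] at this
      exact absurd this (by decide)
    have hf2 : ∀ i, i + 2 ≤ k → f i ≠ f (i + 2) := by
      intro i hik h
      have h' : ((k - i : ℕ) : Fin 3) = ((k - (i + 2) : ℕ) : Fin 3) := add_left_cancel h
      rw [show k - i = (k - (i + 2)) + 2 from by omega, Nat.cast_add] at h'
      have : ((2 : ℕ) : Fin 3) = 0 := by
        have := h'.symm
        rwa [left_eq_add] at this
      exact absurd this (by decide)
    set c' : V → Fin 3 := fun u =>
      if h : ∃ i, i < k ∧ u = v i then f (Classical.choose h)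
      else c ⟨u, fun i hi hui => h ⟨i, hi, hui⟩⟩ with hc'def
    have hc'S : ∀ u (hu : u ∈ S), c' u = c ⟨u, hu⟩ := by
      intro u hu
      have hno : ¬ ∃ i, i < k ∧ u = v i := fun ⟨i, hi, he⟩ => hu i hi he
      simp only [hc'def, dif_neg hno]
    have hc'v : ∀ i, i ≤ k → c' (v i) = f i := by
      intro i hi
      rcases eq_or_lt_of_le hi with rfl | hlt
      · rw [hc'S (v i) hvkS, hfk]
      · have hex : ∃ j, j < k ∧ v i = v j := ⟨i, hlt, rfl⟩
        have hspec := Classical.choose_spec hex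
        have heq : Classical.choose hex = i :=
          hinj _ _ hspec.1.le hi hspec.2.symm
        simp only [hc'def, dif_pos hex, heq]
    have key : ∀ i, i < k → ∀ w, G.Adj (v i) w → c' (v i) ≠ c' w := by
      intro i hi w hw
      by_cases hwS : ∀ j, j < k → w ≠ v j
      · obtain ⟨rfl, hik⟩ := lemB i hi w hw hwS
        rw [hc'v i hi.le, hc'v k le_rfl]
        have h1 := hf1 i (by omega)
        rwa [hik] at h1
      · push_neg at hwS
        obtain ⟨j, hj, rfl⟩ := hwS
        rcases lemA i hi (v j) hw with ⟨hpos, hji⟩ | hji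
        · have : j = i - 1 := hinj j (i - 1) hj.le (by omega) hji
          subst this
          rw [hc'v i hi.le, hc'v (i - 1) (by omega)]
          have h1 := hf1 (i - 1) (by omega)
          rw [show i - 1 + 1 = i from by omega] at h1
          exact h1.symm
        · have : j = i + 1 := hinj j (i + 1) hj.le (by omega) hji
          subst this
          rw [hc'v i hi.le, hc'v (i + 1) hj.le]
          exact hf1 i hj.le
    refine ⟨c', ?_, ?_⟩
    · intro u w hw
      by_cases huP : ∃ i, i < k ∧ u = v i
      · obtain ⟨i, hi, rfl⟩ := huP
        exact key i hi w hw
      · by_cases hwP : ∃ j, j < k ∧ w = v j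
        · obtain ⟨j, hj, rfl⟩ := hwP
          exact (key j hj u hw.symm).symm
        · push_neg at huP
          push_neg at hwP
          rw [hc'S u huP, hc'S w hwP]
          exact hproper (show (G.induce S).Adj ⟨u, huP⟩ ⟨w, hwP⟩ from hw)
    · intro u hu2
      by_cases huP : ∃ i, i < k ∧ u = v i
      · obtain ⟨i, hi, rfl⟩ := huP
        rcases Nat.eq_zero_or_pos i with rfl | hpos
        · rw [h0] at hu2; omega
        · have hprev : G.Adj (v i) (v (i - 1)) := by
            have h1 := hadj (i - 1) (by omega)
            rw [show i - 1 + 1 = i from by omega] at h1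
            exact h1.symm
          refine ⟨v (i - 1), v (i + 1), hprev, hadj i hi, ?_⟩
          rw [hc'v (i - 1) (by omega), hc'v (i + 1) hi]
          have h1 := hf2 (i - 1) (by omega)
          rwa [show i - 1 + 2 = i + 1 from by omega] at h1
      · push_neg at huP
        by_cases hvk : u = v k
        · subst hvk
          have h2 : 2 ≤ ((G.induce S).neighborSet ⟨v k, hvkS⟩).ncard := by
            refine (Set.one_lt_ncard (Set.toFinite _)).mpr
              ⟨⟨x, hxS⟩, ?_, ⟨y, hyS⟩, ?_, ?_⟩
            · exact hadjx
            · exact hadjy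
            · intro h
              exact hxy (congrArg Subtype.val h)
          obtain ⟨a, b, ha, hb, hab⟩ := hdyn ⟨v k, hvkS⟩ h2
          refine ⟨↑a, ↑b, ha, hb, ?_⟩
          rw [hc'S ↑a a.2, hc'S ↑b b.2]
          exact hab
        · have h2 : 2 ≤ ((G.induce S).neighborSet ⟨u, huP⟩).ncard := by
            rw [hNeq u huP hvk]
            exact hu2
          obtain ⟨a, b, ha, hb, hab⟩ := hdyn ⟨u, huP⟩ h2
          refine ⟨↑a, ↑b, ha, hb, ?_⟩
          rw [hc'S ↑a a.2, hc'S ↑b b.2]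
          exact hab
end
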